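/- arXiv:2309.11007 — 6 statements merged into one kernel-verified Lean document; each statement's English description precedes it below -/
import Mathlib

section
/- If X ~ Binomial(n,p) and Y ~ Poisson(np), and k, np ≤ √n, then P(X = k) = (1 + O((k² + (np)² + 1)/n)) · P(Y = k). More precisely, there is an absolute constant C such that whenever k ≤ √n and np ≤ √n, |P(X = k) − P(Y = k)| ≤ C · ((k² + (np)² + 1)/n) · P(Y = k). -/
/-- The probability that a Binomial(n,p) random variable equals `k`. -/
noncomputable def binomialPMFReal (n : ℕ) (p : ℝ) (k : ℕ) : ℝ :=
  (n.choose k : ℝ) * p ^ k * (1 - p) ^ (n - k)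

/-- The probability that a Poisson(μ) random variable equals `k`. -/
noncomputable def poissonProb (μ : ℝ) (k : ℕ) : ℝ :=
  Real.exp (-μ) * μ ^ k / (Nat.factorial k : ℝ)

open Finset
lemma exp_neg_le_one_sub {t : ℝ} (h0 : 0 ≤ t) (h1 : t ≤ 1/2) :
    Real.exp (-(t + 2*t^2)) ≤ 1 - t := by
  have hE := Real.add_one_le_exp (t + 2*t^2)
  have hmul : Real.exp (-(t + 2*t^2)) * Real.exp (t + 2*t^2) = 1 := by
    rw [← Real.exp_add, show -(t+2*t^2)+(t+2*t^2) = 0 by ring, Real.exp_zero]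
  nlinarith [Real.exp_pos (-(t + 2*t^2)), Real.exp_pos (t + 2*t^2)]

lemma binom_eq_poisson_mul (n k : ℕ) (p : ℝ) (hn : 0 < n) (hk : k ≤ n) :
    binomialPMFReal n p k =
      poissonProb ((n : ℝ) * p) k *
        (Real.exp ((n:ℝ)*p) * (1-p)^(n-k) * ∏ i ∈ range k, (1 - (i:ℝ)/n)) := by
  have hn0 : (n:ℝ) ≠ 0 := Nat.cast_ne_zero.mpr hn.ne'
  have hdesc : ((n.descFactorial k : ℕ) : ℝ) = ∏ i ∈ range k, ((n:ℝ) - i) := by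
    rw [Nat.descFactorial_eq_prod_range, Nat.cast_prod]
    refine Finset.prod_congr rfl fun i hi => ?_
    rw [Nat.cast_sub (le_trans (Finset.mem_range.mp hi).le hk)]
  have key : ((n:ℝ)*p)^k * ∏ i ∈ range k, (1 - (i:ℝ)/n)
      = (k.factorial : ℝ) * (n.choose k) * p^k := by
    rw [mul_pow]
    have h1 : (n:ℝ)^k * ∏ i ∈ range k, (1 - (i:ℝ)/n) = ∏ i ∈ range k, ((n:ℝ) - i) := by
      have h2 : ∏ i ∈ range k, ((n:ℝ) * (1 - (i:ℝ)/n)) = (n:ℝ)^k * ∏ i ∈ range k, (1 - (i:ℝ)/n) := by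
        rw [Finset.prod_mul_distrib, Finset.prod_const, Finset.card_range]
      rw [← h2]
      refine Finset.prod_congr rfl fun i hi => ?_
      field_simp
    calc (n:ℝ)^k * p^k * ∏ i ∈ range k, (1 - (i:ℝ)/n)
        = ((n:ℝ)^k * ∏ i ∈ range k, (1 - (i:ℝ)/n)) * p^k := by ring
      _ = (∏ i ∈ range k, ((n:ℝ) - i)) * p^k := by rw [h1]
      _ = (k.factorial : ℝ) * (n.choose k) * p^k := by
          rw [← hdesc, Nat.descFactorial_eq_factorial_mul_choose]; push_cast; ring
  have hfac : (k.factorial : ℝ) ≠ 0 := Nat.cast_ne_zero.mpr k.factorial_ne_zero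
  have hexp : Real.exp (-((n:ℝ)*p)) * Real.exp ((n:ℝ)*p) = 1 := by
    rw [← Real.exp_add]; simp
  unfold binomialPMFReal poissonProb
  symm
  calc Real.exp (-((n:ℝ)*p)) * ((n:ℝ)*p)^k / (k.factorial : ℝ) *
        (Real.exp ((n:ℝ)*p) * (1-p)^(n-k) * ∏ i ∈ range k, (1 - (i:ℝ)/n))
      = (Real.exp (-((n:ℝ)*p)) * Real.exp ((n:ℝ)*p)) *
          ((((n:ℝ)*p)^k * ∏ i ∈ range k, (1 - (i:ℝ)/n)) * (1-p)^(n-k)) / (k.factorial : ℝ) := by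
        ring
    _ = 1 * (((k.factorial : ℝ) * (n.choose k) * p^k) * (1-p)^(n-k)) / (k.factorial : ℝ) := by
        rw [hexp, key]
    _ = (n.choose k : ℝ) * p^k * (1-p)^(n-k) := by
        field_simp

set_option maxHeartbeats 4000000 in
/-- If `X ~ Binomial(n,p)` and `Y ~ Poisson(np)`, and `k, np ≤ √n`, then
`P(X = k) = (1 + O((k² + (np)² + 1)/n)) · P(Y = k)`: there is an absolute constant `C`
such that `|P(X = k) − P(Y = k)| ≤ C·((k² + (np)² + 1)/n)·P(Y = k)`. -/
theorem binomial_poisson_comparison :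
    ∃ C : ℝ, 0 < C ∧
      ∀ (n k : ℕ) (p : ℝ), 0 < n → 0 ≤ p → p ≤ 1 →
        (k : ℝ) ≤ Real.sqrt n → (n : ℝ) * p ≤ Real.sqrt n →
        |binomialPMFReal n p k - poissonProb ((n : ℝ) * p) k| ≤
          C * (((k : ℝ) ^ 2 + ((n : ℝ) * p) ^ 2 + 1) / n) * poissonProb ((n : ℝ) * p) k := by
  refine ⟨21, by norm_num, ?_⟩
  intro n k p hn hp0 hp1 hks hnps
  have hn0 : (0:ℝ) < n := by exact_mod_cast hn
  have hn1 : (1:ℝ) ≤ n := by exact_mod_cast hn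
  have hs0 : 0 ≤ Real.sqrt n := Real.sqrt_nonneg n
  have hsq : Real.sqrt n ^ 2 = (n:ℝ) := Real.sq_sqrt hn0.le
  have hk0 : (0:ℝ) ≤ k := Nat.cast_nonneg k
  have hnp0 : (0:ℝ) ≤ (n:ℝ)*p := mul_nonneg hn0.le hp0
  have hk2 : (k:ℝ)^2 ≤ n := by nlinarith
  have hnp2 : ((n:ℝ)*p)^2 ≤ n := by nlinarith
  have hs1 : 1 ≤ Real.sqrt n := by nlinarith
  have hkn : (k:ℝ) ≤ n := by nlinarith
  have hkn' : k ≤ n := by exact_mod_cast hkn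
  have hP0 : 0 ≤ poissonProb ((n:ℝ)*p) k := by
    unfold poissonProb; positivity
  by_cases hn4 : 4 ≤ n
  · -- large n
    set P := poissonProb ((n:ℝ)*p) k with hPdef
    set ε : ℝ := ((k:ℝ)^2 + ((n:ℝ)*p)^2 + 1)/n with hε
    have hε0 : 0 ≤ ε := by positivity
    have hpkε : p * (k:ℝ) ≤ ε := by
      rw [hε, le_div_iff₀ hn0]
      nlinarith [sq_nonneg ((n:ℝ)*p - (k:ℝ))]
    have hpk0 : 0 ≤ p * (k:ℝ) := mul_nonneg hp0 hk0
    have hpk1 : p * (k:ℝ) ≤ 1 := by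
      nlinarith [sq_nonneg ((n:ℝ)*p - (k:ℝ))]
    have hn4' : (4:ℝ) ≤ n := by exact_mod_cast hn4
    have hs2 : (2:ℝ) ≤ Real.sqrt n := by
      nlinarith [hsq, hs0, hn4']
    have hps : p * Real.sqrt n ≤ 1 := by
      have h1 : (p * Real.sqrt n) * Real.sqrt n ≤ 1 * Real.sqrt n := by
        rw [one_mul, mul_assoc, ← sq, hsq]
        linarith [hnps]
      exact le_of_mul_le_mul_right h1 (by linarith)
    have hp2 : p ≤ 1/2 := by
      have h2 : p * 2 ≤ p * Real.sqrt n := mul_le_mul_of_nonneg_left hs2 hp0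
      linarith
    have h1p0 : (0:ℝ) ≤ 1 - p := by linarith
    set R := Real.exp ((n:ℝ)*p) * (1-p)^(n-k) * ∏ i ∈ Finset.range k, (1 - (i:ℝ)/n) with hR
    have hBP : binomialPMFReal n p k = P * R := binom_eq_poisson_mul n k p hn hkn'
    have hcast : ((n - k : ℕ) : ℝ) = (n:ℝ) - k := Nat.cast_sub hkn'
    have hin : ∀ i ∈ Finset.range k, 0 ≤ (i:ℝ)/n ∧ (i:ℝ)/n ≤ 1/2 := by
      intro i hi
      have hik : (i:ℝ) + 1 ≤ (k:ℝ) := by exact_mod_cast Finset.mem_range.mp hi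
      constructor
      · positivity
      · rw [div_le_iff₀ hn0]
        nlinarith [sq_nonneg (Real.sqrt n - 1)]
    -- upper bound on R
    have hprod_le : ∏ i ∈ Finset.range k, (1 - (i:ℝ)/n) ≤ 1 := by
      apply Finset.prod_le_one
      · intro i hi; have := hin i hi; linarith [this.2]
      · intro i hi; have := hin i hi; linarith [this.1]
    have h1p : 1 - p ≤ Real.exp (-p) := by
      nlinarith [Real.add_one_le_exp (-p)]
    have hpow_le : (1-p)^(n-k) ≤ Real.exp (((n:ℝ) - k) * (-p)) := by
      calc (1-p)^(n-k) ≤ Real.exp (-p) ^ (n-k) := pow_le_pow_left₀ h1p0 h1p _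
        _ = Real.exp (((n-k:ℕ):ℝ) * (-p)) := (Real.exp_nat_mul _ _).symm
        _ = Real.exp (((n:ℝ) - k) * (-p)) := by rw [hcast]
    have hprod_nonneg : 0 ≤ ∏ i ∈ Finset.range k, (1 - (i:ℝ)/n) :=
      Finset.prod_nonneg fun i hi => by linarith [(hin i hi).2]
    have hRub : R ≤ Real.exp (p * k) := by
      calc R ≤ Real.exp ((n:ℝ)*p) * Real.exp (((n:ℝ) - k) * (-p)) * 1 := by
            apply mul_le_mul
            · exact mul_le_mul_of_nonneg_left hpow_le (Real.exp_pos _).le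
            · exact hprod_le
            · exact hprod_nonneg
            · positivity
        _ = Real.exp ((n:ℝ)*p + ((n:ℝ) - k) * (-p)) := by rw [mul_one, ← Real.exp_add]
        _ = Real.exp (p * k) := by ring_nf
    -- lower bound on R
    have hsum_le : ∑ i ∈ Finset.range k, ((i:ℝ)/n + 2*((i:ℝ)/n)^2) ≤ 3*(k:ℝ)^2/n := by
      have hterm : ∀ i ∈ Finset.range k, (i:ℝ)/n + 2*((i:ℝ)/n)^2 ≤ (k:ℝ)/n + 2*((k:ℝ)/n)^2 := by
        intro i hi
        have hik : (i:ℝ) ≤ (k:ℝ) := by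
          exact_mod_cast (Finset.mem_range.mp hi).le
        have h1 : (i:ℝ)/n ≤ (k:ℝ)/n := by gcongr
        have h2 : 0 ≤ (i:ℝ)/n := by positivity
        nlinarith
      calc ∑ i ∈ Finset.range k, ((i:ℝ)/n + 2*((i:ℝ)/n)^2)
          ≤ ∑ _i ∈ Finset.range k, ((k:ℝ)/n + 2*((k:ℝ)/n)^2) := Finset.sum_le_sum hterm
        _ = (k:ℝ) * ((k:ℝ)/n + 2*((k:ℝ)/n)^2) := by
            rw [Finset.sum_const, Finset.card_range, nsmul_eq_mul]
        _ ≤ 3*(k:ℝ)^2/n := by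
            rw [div_add' _ _ _ hn0.ne', ← sub_nonneg]
            have e1 : 3*(k:ℝ)^2/n - (k:ℝ) * (((k:ℝ) + 2*((k:ℝ)/n)^2 * n)/n)
                = (2*(k:ℝ)^2*(n - k))/(n^2) := by
              field_simp
              ring
            rw [e1]
            apply div_nonneg (by nlinarith) (by positivity)
    have hq0 : (0:ℝ) ≤ p + 2*p^2 := by nlinarith
    have hpow_ge : Real.exp (-((p + 2*p^2) * n)) ≤ (1-p)^(n-k) := by
      have step1 : Real.exp (-(p + 2*p^2)) ≤ 1 - p := exp_neg_le_one_sub hp0 hp2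
      have step2 : Real.exp (-(p + 2*p^2)) ^ (n-k) ≤ (1-p)^(n-k) :=
        pow_le_pow_left₀ (Real.exp_pos _).le step1 _
      have step3 : Real.exp (-(p + 2*p^2)) ^ (n-k)
          = Real.exp (((n:ℝ) - k) * (-(p + 2*p^2))) := by
        rw [← Real.exp_nat_mul, hcast]
      have step4 : -((p + 2*p^2) * n) ≤ ((n:ℝ) - k) * (-(p + 2*p^2)) := by
        nlinarith [mul_nonneg hk0 hq0]
      calc Real.exp (-((p + 2*p^2) * n))
          ≤ Real.exp (((n:ℝ) - k) * (-(p + 2*p^2))) := Real.exp_le_exp.mpr step4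
        _ = Real.exp (-(p + 2*p^2)) ^ (n-k) := step3.symm
        _ ≤ (1-p)^(n-k) := step2
    have hprod_ge : Real.exp (-(3*(k:ℝ)^2/n)) ≤ ∏ i ∈ Finset.range k, (1 - (i:ℝ)/n) := by
      have h2 : Real.exp (∑ i ∈ Finset.range k, -((i:ℝ)/n + 2*((i:ℝ)/n)^2))
          = ∏ i ∈ Finset.range k, Real.exp (-((i:ℝ)/n + 2*((i:ℝ)/n)^2)) := Real.exp_sum _ _
      have h3 : ∏ i ∈ Finset.range k, Real.exp (-((i:ℝ)/n + 2*((i:ℝ)/n)^2))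
          ≤ ∏ i ∈ Finset.range k, (1 - (i:ℝ)/n) :=
        Finset.prod_le_prod (fun i _ => (Real.exp_pos _).le)
          (fun i hi => exp_neg_le_one_sub (hin i hi).1 (hin i hi).2)
      have h1 : Real.exp (-(3*(k:ℝ)^2/n))
          ≤ Real.exp (∑ i ∈ Finset.range k, -((i:ℝ)/n + 2*((i:ℝ)/n)^2)) := by
        apply Real.exp_le_exp.mpr
        rw [Finset.sum_neg_distrib]
        linarith [hsum_le]
      calc Real.exp (-(3*(k:ℝ)^2/n))
          ≤ Real.exp (∑ i ∈ Finset.range k, -((i:ℝ)/n + 2*((i:ℝ)/n)^2)) := h1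
        _ = _ := h2
        _ ≤ _ := h3
    have hRlb : Real.exp (-(2*(n:ℝ)*p^2 + 3*(k:ℝ)^2/n)) ≤ R := by
      calc Real.exp (-(2*(n:ℝ)*p^2 + 3*(k:ℝ)^2/n))
          = Real.exp ((n:ℝ)*p) * Real.exp (-((p + 2*p^2) * n)) * Real.exp (-(3*(k:ℝ)^2/n)) := by
            rw [← Real.exp_add, ← Real.exp_add]; congr 1; ring
        _ ≤ R := by
            rw [hR]
            apply mul_le_mul
            · exact mul_le_mul_of_nonneg_left hpow_ge (Real.exp_pos _).le
            · exact hprod_ge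
            · exact (Real.exp_pos _).le
            · exact mul_nonneg (Real.exp_pos _).le (pow_nonneg h1p0 _)
    have hexpk1 : Real.exp (p*(k:ℝ)) ≤ Real.exp 1 := Real.exp_le_exp.mpr hpk1
    have hub2 : R - 1 ≤ Real.exp 1 * (p*(k:ℝ)) := by
      have t1 := mul_le_mul_of_nonneg_left (Real.add_one_le_exp (-(p*(k:ℝ))))
        (Real.exp_pos (p*(k:ℝ))).le
      have t2 : Real.exp (p*(k:ℝ)) * Real.exp (-(p*(k:ℝ))) = 1 := by
        rw [← Real.exp_add]; simp
      have t3 : (p*(k:ℝ)) * Real.exp (p*(k:ℝ)) ≤ (p*(k:ℝ)) * Real.exp 1 :=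
        mul_le_mul_of_nonneg_left hexpk1 hpk0
      nlinarith [hRub]
    have hlb2 : 1 - R ≤ 2*(n:ℝ)*p^2 + 3*(k:ℝ)^2/n := by
      have := Real.add_one_le_exp (-(2*(n:ℝ)*p^2 + 3*(k:ℝ)^2/n))
      linarith [hRlb]
    have he3 : Real.exp 1 ≤ 3 := by linarith [Real.exp_one_lt_d9]
    have h22 : Real.exp 1 * (p*(k:ℝ)) ≤ 21 * ε := by
      have t4 : Real.exp 1 * (p*(k:ℝ)) ≤ 3 * (p*(k:ℝ)) :=
        mul_le_mul_of_nonneg_right he3 hpk0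
      linarith [hpkε]
    have h21 : 2*(n:ℝ)*p^2 + 3*(k:ℝ)^2/n ≤ 21 * ε := by
      have e2 : 21*(((k:ℝ)^2 + ((n:ℝ)*p)^2 + 1)/n) - (2*(n:ℝ)*p^2 + 3*(k:ℝ)^2/n)
          = (18*(k:ℝ)^2 + 19*((n:ℝ)*p)^2 + 21)/n := by
        field_simp
        ring
      have e3 : (0:ℝ) ≤ (18*(k:ℝ)^2 + 19*((n:ℝ)*p)^2 + 21)/n := by positivity
      rw [hε]
      linarith [e2, e3]
    have hRabs : |R - 1| ≤ 21 * ε := by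
      rw [abs_le]
      constructor
      · linarith [h21, hlb2]
      · linarith [hub2, h22]
    rw [hBP]
    have habs : |P * R - P| = P * |R - 1| := by
      rw [show P*R - P = P*(R-1) by ring, abs_mul, abs_of_nonneg hP0]
    rw [habs]
    calc P * |R - 1| ≤ P * (21 * ε) := mul_le_mul_of_nonneg_left hRabs hP0
      _ = 21 * ε * P := by ring
  · -- small n
    have hn3 : (n:ℝ) ≤ 3 := by
      have : n ≤ 3 := by omega
      exact_mod_cast this
    have hk1 : k ≤ 1 := by
      have hlt : Real.sqrt n < 2 := by nlinarith [hsq, hs0]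
      have h2 : (k:ℝ) < 2 := lt_of_le_of_lt hks hlt
      have h3 : k < 2 := by exact_mod_cast h2
      omega
    have h1p0 : (0:ℝ) ≤ 1 - p := by linarith
    have h1p : 1 - p ≤ Real.exp (-p) := by
      nlinarith [Real.add_one_le_exp (-p)]
    have hE : (0:ℝ) < Real.exp (-((n:ℝ)*p)) := Real.exp_pos _
    interval_cases k
    · -- k = 0
      simp only [binomialPMFReal, poissonProb, Nat.choose_zero_right, Nat.sub_zero,
        Nat.factorial_zero, Nat.cast_one, Nat.cast_zero, pow_zero, mul_one, one_mul, div_one]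
      have hBle : (1-p)^n ≤ Real.exp (-((n:ℝ)*p)) := by
        calc (1-p)^n ≤ Real.exp (-p) ^ n := pow_le_pow_left₀ h1p0 h1p n
          _ = Real.exp ((n:ℝ) * (-p)) := (Real.exp_nat_mul _ _).symm
          _ = Real.exp (-((n:ℝ)*p)) := by ring_nf
      have hB0 : 0 ≤ (1-p)^n := pow_nonneg h1p0 n
      have hfrac : (1:ℝ)/3 ≤ ((0:ℝ)^2 + ((n:ℝ)*p)^2 + 1)/n := by
        rw [div_le_div_iff₀ (by norm_num) hn0]
        nlinarith
      have h7 : (7:ℝ) * Real.exp (-((n:ℝ)*p))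
          ≤ 21 * (((0:ℝ)^2 + ((n:ℝ)*p)^2 + 1)/n) * Real.exp (-((n:ℝ)*p)) := by
        nlinarith [mul_le_mul_of_nonneg_right hfrac hE.le]
      rw [abs_le]
      constructor
      · nlinarith
      · nlinarith
    · -- k = 1
      simp only [binomialPMFReal, poissonProb, Nat.choose_one_right, pow_one,
        Nat.factorial_one, Nat.cast_one, div_one]
      have hcast1 : ((n - 1 : ℕ) : ℝ) = (n:ℝ) - 1 := by rw [Nat.cast_sub hn, Nat.cast_one]
      have hstep : (1-p)^(n-1) ≤ Real.exp (-((n:ℝ)*p)) * Real.exp 1 := by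
        calc (1-p)^(n-1) ≤ Real.exp (-p) ^ (n-1) := pow_le_pow_left₀ h1p0 h1p _
          _ = Real.exp (((n-1:ℕ):ℝ) * (-p)) := (Real.exp_nat_mul _ _).symm
          _ = Real.exp (-((n:ℝ)*p) + p) := by rw [hcast1]; ring_nf
          _ = Real.exp (-((n:ℝ)*p)) * Real.exp p := Real.exp_add _ _
          _ ≤ Real.exp (-((n:ℝ)*p)) * Real.exp 1 :=
              mul_le_mul_of_nonneg_left (Real.exp_le_exp.mpr hp1) (Real.exp_pos _).le
      have hBle : (n:ℝ)*p*(1-p)^(n-1) ≤ Real.exp 1 * (Real.exp (-((n:ℝ)*p)) * ((n:ℝ)*p)) := by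
        calc (n:ℝ)*p*(1-p)^(n-1) ≤ (n:ℝ)*p*(Real.exp (-((n:ℝ)*p)) * Real.exp 1) :=
              mul_le_mul_of_nonneg_left hstep hnp0
          _ = Real.exp 1 * (Real.exp (-((n:ℝ)*p)) * ((n:ℝ)*p)) := by ring
      have hB0 : 0 ≤ (n:ℝ)*p*(1-p)^(n-1) := mul_nonneg hnp0 (pow_nonneg h1p0 _)
      have hP0' : 0 ≤ Real.exp (-((n:ℝ)*p)) * ((n:ℝ)*p) := mul_nonneg hE.le hnp0
      have he3 : Real.exp 1 ≤ 3 := by linarith [Real.exp_one_lt_d9]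
      have hfrac : (2:ℝ)/3 ≤ ((1:ℝ)^2 + ((n:ℝ)*p)^2 + 1)/n := by
        rw [div_le_div_iff₀ (by norm_num) hn0]
        nlinarith
      have t5 := mul_le_mul_of_nonneg_right hfrac hP0'
      have t6 := mul_le_mul_of_nonneg_right he3 hP0'
      rw [abs_le]
      constructor
      · nlinarith
      · nlinarith
end

section
/- Let X ~ Poisson(λ) and δ ≥ 1/√λ. For all sufficiently large λ, P(X ≥ λ(1+δ)) ≤ e^{−λ h(δ)} / √(λ · min{δ, δ²}), where h(δ) = (1+δ)log(1+δ) − δ. -/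
/-- The upper tail `P(X ≥ x)` of a Poisson(μ) random variable. -/
noncomputable def poissonTail (μ : ℝ) (x : ℝ) : ℝ :=
  ∑' k : ℕ, if x ≤ (k : ℝ) then poissonProb μ k else 0

/-- The large deviation rate function `h(δ) = (1+δ)log(1+δ) − δ`. -/
noncomputable def poissonRate (δ : ℝ) : ℝ := (1 + δ) * Real.log (1 + δ) - δ


open Real

-- Stirling lower bound: n! ≥ √π √(2n) (n/e)^n for n ≥ 1
lemma stirling_lower (n : ℕ) (hn : 1 ≤ n) :
    Real.sqrt π * (Real.sqrt (2 * n) * ((n : ℝ) / Real.exp 1) ^ n) ≤ (n.factorial : ℝ) := by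
  have h1 : Real.sqrt π ≤ Stirling.stirlingSeq n := by
    obtain ⟨m, rfl⟩ := Nat.exists_eq_add_of_le hn
    have := Stirling.stirlingSeq'_antitone.le_of_tendsto
      (Stirling.tendsto_stirlingSeq_sqrt_pi.comp (Filter.tendsto_add_atTop_nat 1)) m
    simpa [Function.comp, Nat.succ_eq_add_one, Nat.add_comm] using this
  have hpos : (0:ℝ) < Real.sqrt (2 * n) * ((n : ℝ) / Real.exp 1) ^ n := by
    have : (0:ℝ) < (n:ℝ) := by exact_mod_cast hn
    positivity
  rw [Stirling.stirlingSeq, le_div_iff₀ hpos] at h1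
  linarith

lemma poissonProb_nonneg {μ : ℝ} (hμ : 0 ≤ μ) (k : ℕ) : 0 ≤ poissonProb μ k := by
  unfold poissonProb; positivity

lemma poisson_ratio {μ : ℝ} (hμ : 0 < μ) (n i : ℕ) :
    poissonProb μ (n + i) ≤ poissonProb μ n * (μ / (n + 1)) ^ i := by
  unfold poissonProb
  have key : ((n.factorial : ℝ)) * ((n:ℝ) + 1) ^ i ≤ ((n + i).factorial : ℝ) := by
    calc ((n.factorial : ℝ)) * ((n:ℝ) + 1) ^ i
        = ((n.factorial * (n+1)^i : ℕ) : ℝ) := by push_cast; ring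
      _ ≤ ((n + i).factorial : ℝ) := by
          exact_mod_cast Nat.factorial_mul_pow_le_factorial
  have h1 : (0:ℝ) < (n.factorial : ℝ) * ((n:ℝ) + 1) ^ i := by positivity
  have h2 : Real.exp (-μ) * μ ^ (n+i) / ((n + i).factorial : ℝ)
      ≤ Real.exp (-μ) * μ ^ (n+i) / ((n.factorial : ℝ) * ((n:ℝ) + 1) ^ i) :=
    div_le_div_of_nonneg_left (by positivity) h1 key
  calc Real.exp (-μ) * μ ^ (n+i) / ((n + i).factorial : ℝ)
      ≤ Real.exp (-μ) * μ ^ (n+i) / ((n.factorial : ℝ) * ((n:ℝ) + 1) ^ i) := h2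
    _ = Real.exp (-μ) * μ ^ n / (n.factorial : ℝ) * (μ / ((n:ℝ) + 1)) ^ i := by
        rw [pow_add, div_pow]; ring

lemma tail_le {lam x : ℝ} (hlam : 0 < lam) (n : ℕ) (hxn : x ≤ (n : ℝ))
    (hlow : ∀ k : ℕ, x ≤ (k : ℝ) → n ≤ k) (hN : lam < (n : ℝ) + 1) :
    poissonTail lam x ≤
      poissonProb lam n * (((n : ℝ) + 1) / (((n : ℝ) + 1) - lam)) := by
  set r : ℝ := lam / ((n : ℝ) + 1) with hrdef
  have hr0 : 0 < r := by positivity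
  have hr1 : r < 1 := (div_lt_one (by positivity)).mpr hN
  set f : ℕ → ℝ := fun k => if x ≤ (k : ℝ) then poissonProb lam k else 0 with hf
  have hfnn : ∀ k, 0 ≤ f k := by
    intro k; simp only [hf]
    split
    · exact poissonProb_nonneg hlam.le k
    · exact le_refl 0
  have hfle : ∀ k, f k ≤ (poissonProb lam n / r ^ n) * r ^ k := by
    intro k
    simp only [hf]
    split
    · rename_i hk
      obtain ⟨i, rfl⟩ := Nat.exists_eq_add_of_le (hlow k hk)
      calc poissonProb lam (n + i) ≤ poissonProb lam n * r ^ i := poisson_ratio hlam n i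
        _ = (poissonProb lam n / r ^ n) * r ^ (n + i) := by
            rw [pow_add]; field_simp
    · exact mul_nonneg (div_nonneg (poissonProb_nonneg hlam.le n) (by positivity))
        (by positivity)
  have hgeo : Summable fun k : ℕ => (poissonProb lam n / r ^ n) * r ^ k :=
    (summable_geometric_of_lt_one hr0.le hr1).mul_left _
  have hsum : Summable f := Summable.of_nonneg_of_le hfnn hfle hgeo
  have hgeo2 : Summable fun i : ℕ => poissonProb lam n * r ^ i :=
    (summable_geometric_of_lt_one hr0.le hr1).mul_left _
  have hsplit := Summable.sum_add_tsum_nat_add (f := f) n hsum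
  have hzero : ∑ i ∈ Finset.range n, f i = 0 := by
    apply Finset.sum_eq_zero
    intro i hi
    simp only [hf]
    rw [if_neg]
    intro hcon
    exact absurd (hlow i hcon) (Nat.not_le.mpr (Finset.mem_range.mp hi))
  have htail_eq : poissonTail lam x = ∑' i : ℕ, f (i + n) := by
    unfold poissonTail
    rw [← hsplit, hzero, zero_add]
  rw [htail_eq]
  have hle2 : ∑' i : ℕ, f (i + n) ≤ ∑' i : ℕ, poissonProb lam n * r ^ i := by
    refine Summable.tsum_le_tsum (f := fun i => f (i + n))
      (g := fun i : ℕ => poissonProb lam n * r ^ i) (fun i => ?_)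
      ((summable_nat_add_iff n).2 hsum) hgeo2
    simp only [hf]
    rw [if_pos (by push_cast; linarith [Nat.cast_nonneg (α := ℝ) i])]
    have := poisson_ratio hlam n i
    rwa [Nat.add_comm i n]
  refine hle2.trans ?_
  rw [tsum_mul_left, tsum_geometric_of_lt_one hr0.le hr1]
  have h1r : 1 - r = (((n : ℝ) + 1) - lam) / ((n : ℝ) + 1) := by
    rw [hrdef]; field_simp
  rw [h1r, inv_div]

lemma prob_le_exp {lam : ℝ} (hlam : 0 < lam) (n : ℕ) (hn : 1 ≤ n) :
    poissonProb lam n ≤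
      Real.exp ((n : ℝ) - (n : ℝ) * (Real.log n - Real.log lam) - lam) /
        Real.sqrt (2 * Real.pi * n) := by
  have hn0 : (0:ℝ) < (n : ℝ) := by exact_mod_cast hn
  have hsq : Real.sqrt (2 * Real.pi * n) = Real.sqrt π * Real.sqrt (2 * n) := by
    rw [← Real.sqrt_mul Real.pi_pos.le]
    ring_nf
  have hfact : Real.sqrt (2 * Real.pi * n) * ((n : ℝ) / Real.exp 1) ^ n ≤ (n.factorial : ℝ) := by
    rw [hsq, mul_assoc]; exact stirling_lower n hn
  have hdpos : (0:ℝ) < Real.sqrt (2 * Real.pi * n) * ((n : ℝ) / Real.exp 1) ^ n := by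
    positivity
  have key : Real.exp ((n : ℝ) - (n : ℝ) * (Real.log n - Real.log lam) - lam)
      = Real.exp (-lam) * lam ^ n * Real.exp n / (n : ℝ) ^ n := by
    rw [show (n : ℝ) - (n : ℝ) * (Real.log n - Real.log lam) - lam
        = -lam + ((n : ℝ) * Real.log lam + ((n:ℝ) - (n : ℝ) * Real.log n)) by ring]
    rw [Real.exp_add, Real.exp_add, Real.exp_sub, Real.exp_nat_mul, Real.exp_nat_mul,
      Real.exp_log hlam, Real.exp_log hn0]
    ring
  have step1 : poissonProb lam n ≤
      Real.exp (-lam) * lam ^ n / (Real.sqrt (2 * Real.pi * n) * ((n : ℝ) / Real.exp 1) ^ n) := by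
    unfold poissonProb
    exact div_le_div_of_nonneg_left (by positivity) hdpos hfact
  refine step1.trans_eq ?_
  rw [key, div_pow, show Real.exp 1 ^ n = Real.exp (n : ℝ) by rw [← Real.exp_nat_mul]; ring_nf]
  rw [div_eq_div_iff (by positivity) (by positivity)]
  field_simp

lemma g_antitone {lam : ℝ} (hlam : 0 < lam) :
    AntitoneOn (fun t : ℝ => t - t * (Real.log t - Real.log lam) - lam) (Set.Ici lam) := by
  have hderiv : ∀ t ∈ Set.Ioi lam,
      HasDerivAt (fun t : ℝ => t - t * (Real.log t - Real.log lam) - lam)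
        (Real.log lam - Real.log t) t := by
    intro t ht
    have ht0 : t ≠ 0 := by have := hlam.trans ht; positivity
    have h1 : HasDerivAt (fun t : ℝ => Real.log t - Real.log lam) t⁻¹ t :=
      (Real.hasDerivAt_log ht0).sub_const _
    have h2 : HasDerivAt (fun t : ℝ => t * (Real.log t - Real.log lam))
        (1 * (Real.log t - Real.log lam) + t * t⁻¹) t :=
      (hasDerivAt_id t).mul h1
    have h3 := ((hasDerivAt_id t).sub h2).sub_const lam
    refine h3.congr_deriv ?_
    rw [mul_inv_cancel₀ ht0]; ring
  apply antitoneOn_of_deriv_nonpos (convex_Ici lam)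
  · apply ContinuousOn.sub _ continuousOn_const
    apply ContinuousOn.sub continuousOn_id
    apply ContinuousOn.mul continuousOn_id
    apply ContinuousOn.sub _ continuousOn_const
    apply ContinuousOn.mono Real.continuousOn_log
    intro t ht
    simp only [Set.mem_compl_iff, Set.mem_singleton_iff]
    have : lam ≤ t := ht
    intro h; rw [h] at this; linarith
  · rw [interior_Ici]
    intro t ht
    exact (hderiv t ht).differentiableAt.differentiableWithinAt
  · rw [interior_Ici]
    intro t ht
    rw [(hderiv t ht).deriv]
    have : Real.log lam ≤ Real.log t := Real.log_le_log hlam (le_of_lt ht)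
    linarith

/-- Sharp Poisson upper tail bound: for `X ~ Poisson(λ)` and `δ ≥ 1/√λ`, for all
sufficiently large `λ`, `P(X ≥ λ(1+δ)) ≤ e^{−λ h(δ)} / √(λ min{δ,δ²})`. -/
theorem sharp_poisson_tail_upper :
    ∃ Λ : ℝ, ∀ lam : ℝ, Λ ≤ lam → ∀ δ : ℝ, 1 / Real.sqrt lam ≤ δ →
      poissonTail lam (lam * (1 + δ)) ≤
        Real.exp (-(lam * poissonRate δ)) / Real.sqrt (lam * min δ (δ ^ 2)) := by
  use 100
  intro lam hlam δ hδ
  have hlam0 : (0:ℝ) < lam := by linarith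
  have hsqpos : 0 < Real.sqrt lam := Real.sqrt_pos.mpr hlam0
  have hδ0 : 0 < δ := lt_of_lt_of_le (by positivity) hδ
  obtain ⟨x, hxdef⟩ : ∃ x : ℝ, x = lam * (1 + δ) := ⟨_, rfl⟩
  rw [← hxdef]
  have hx0 : 0 < x := by rw [hxdef]; positivity
  have hlx : lam < x := by rw [hxdef]; nlinarith
  obtain ⟨n, hndef⟩ : ∃ n : ℕ, n = ⌈x⌉₊ := ⟨_, rfl⟩
  have hxn : x ≤ (n : ℝ) := hndef ▸ Nat.le_ceil x
  have hnx1 : (n : ℝ) < x + 1 := hndef ▸ Nat.ceil_lt_add_one hx0.le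
  have hn1 : 1 ≤ n := by
    have : (1:ℝ) ≤ (n : ℝ) := by linarith
    exact_mod_cast this
  have hlow : ∀ k : ℕ, x ≤ (k : ℝ) → n ≤ k := fun k hk => hndef ▸ Nat.ceil_le.mpr hk
  obtain ⟨N, hNdef⟩ : ∃ N : ℝ, N = (n : ℝ) + 1 := ⟨_, rfl⟩
  have hNlam' : lam < N := by rw [hNdef]; linarith
  -- basic quantities
  obtain ⟨m, hmdef⟩ : ∃ m : ℝ, m = min δ (δ ^ 2) := ⟨_, rfl⟩
  rw [← hmdef]
  have hm0 : 0 < m := hmdef ▸ lt_min hδ0 (by positivity)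
  have hsqrtlam10 : (10:ℝ) ≤ Real.sqrt lam := by
    rw [show (10:ℝ) = Real.sqrt 100 by
      rw [show (100:ℝ) = 10^2 by norm_num, Real.sqrt_sq (by norm_num)]]
    exact Real.sqrt_le_sqrt hlam
  have hlamδ : Real.sqrt lam ≤ lam * δ := by
    have h1 : lam * (1 / Real.sqrt lam) ≤ lam * δ :=
      mul_le_mul_of_nonneg_left hδ hlam0.le
    calc Real.sqrt lam = lam / Real.sqrt lam := (Real.div_sqrt).symm
      _ = lam * (1 / Real.sqrt lam) := by ring
      _ ≤ lam * δ := h1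
  have hlamδ10 : (10:ℝ) ≤ lam * δ := le_trans hsqrtlam10 hlamδ
  obtain ⟨M, hMdef⟩ : ∃ M : ℝ, M = lam * max 1 δ := ⟨_, rfl⟩
  have hM0 : 0 < M := by
    have h : (0:ℝ) < max 1 δ := lt_of_lt_of_le one_pos (le_max_left _ _)
    rw [hMdef]; exact mul_pos hlam0 h
  have hMn : M ≤ (n : ℝ) := by
    have h1 : max 1 δ ≤ 1 + δ := max_le (by linarith) (by linarith)
    have : M ≤ x := by
      rw [hMdef, hxdef]
      exact mul_le_mul_of_nonneg_left h1 hlam0.le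
    linarith
  have hlamM : lam ≤ M := by
    rw [hMdef]
    nlinarith [le_max_left (1:ℝ) δ]
  have hNM : N ≤ 2.02 * M := by
    have h1 : N < x + 2 := by linarith
    have h2 : lam * δ ≤ M := by
      rw [hMdef]
      exact mul_le_mul_of_nonneg_left (le_max_right _ _) hlam0.le
    have h3 : (2:ℝ) ≤ 0.02 * lam := by linarith
    have h4 : x + 2 ≤ 2.02 * M := by
      rw [hxdef]
      have : lam * (1 + δ) = lam + lam * δ := by ring
      nlinarith
    linarith
  have hNlamδ : lam * δ ≤ N - lam := by
    have : x + 1 ≤ N := by linarith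
    rw [hxdef] at this
    nlinarith
  have hNlam0 : 0 < N - lam := by nlinarith
  have hN0 : 0 < N := by linarith
  have hmmax : m * max 1 δ = δ ^ 2 := by
    rcases le_total δ 1 with h | h
    · have h2 : δ ^ 2 ≤ δ := by
        rw [sq]
        calc δ * δ ≤ 1 * δ := mul_le_mul_of_nonneg_right h hδ0.le
          _ = δ := one_mul δ
      rw [hmdef, min_eq_right h2, max_eq_left h, mul_one]
    · have h2 : δ ≤ δ ^ 2 := by
        rw [sq]
        calc δ = 1 * δ := (one_mul δ).symm
          _ ≤ δ * δ := mul_le_mul_of_nonneg_right h hδ0.le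
      rw [hmdef, min_eq_left h2, max_eq_right h]
      ring
  -- key numeric inequality
  have hπ : (3.1415:ℝ) < Real.pi := by
    have := Real.pi_gt_d6
    linarith
  have hkey2 : lam * m * N ^ 2 ≤ 2 * Real.pi * (n : ℝ) * (N - lam) ^ 2 := by
    have c1 : lam * m * N ^ 2 ≤ lam * m * (2.02 * M) ^ 2 :=
      mul_le_mul_of_nonneg_left (pow_le_pow_left₀ hN0.le hNM 2) (mul_pos hlam0 hm0).le
    have c2 : lam * m * (2.02 * M) ^ 2 = 4.0804 * lam ^ 2 * δ ^ 2 * M := by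
      rw [hMdef]
      linear_combination (4.0804 * lam ^ 3 * max 1 δ) * hmmax
    have c3 : 4.0804 * lam ^ 2 * δ ^ 2 * M ≤ 2 * Real.pi * (n:ℝ) * (lam * δ) ^ 2 := by
      have d0 : (4.0804:ℝ) ≤ 2 * Real.pi := by linarith
      have d1 : 4.0804 * M ≤ 2 * Real.pi * (n:ℝ) :=
        le_trans (mul_le_mul_of_nonneg_right d0 hM0.le)
          (mul_le_mul_of_nonneg_left hMn (by positivity))
      calc 4.0804 * lam ^ 2 * δ ^ 2 * M = (lam ^ 2 * δ ^ 2) * (4.0804 * M) := by ring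
        _ ≤ (lam ^ 2 * δ ^ 2) * (2 * Real.pi * (n:ℝ)) :=
            mul_le_mul_of_nonneg_left d1 (by positivity)
        _ = 2 * Real.pi * (n:ℝ) * (lam * δ) ^ 2 := by ring
    have c4 : 2 * Real.pi * (n:ℝ) * (lam * δ) ^ 2 ≤ 2 * Real.pi * (n:ℝ) * (N - lam) ^ 2 := by
      have h1 := pow_le_pow_left₀ (by positivity : (0:ℝ) ≤ lam * δ) hNlamδ 2
      have h2 : (0:ℝ) ≤ 2 * Real.pi * (n:ℝ) := by positivity
      exact mul_le_mul_of_nonneg_left h1 h2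
    linarith
  have hkey : Real.sqrt (lam * m) * N ≤ Real.sqrt (2 * Real.pi * (n:ℝ)) * (N - lam) := by
    have e1 : Real.sqrt (lam * m) * N = Real.sqrt (lam * m * N ^ 2) := by
      rw [Real.sqrt_mul (by positivity : (0:ℝ) ≤ lam * m) (N ^ 2), Real.sqrt_sq hN0.le]
    have e2 : Real.sqrt (2 * Real.pi * (n:ℝ)) * (N - lam)
        = Real.sqrt (2 * Real.pi * (n:ℝ) * (N - lam) ^ 2) := by
      rw [Real.sqrt_mul (by positivity : (0:ℝ) ≤ 2 * Real.pi * (n:ℝ)) ((N - lam) ^ 2),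
        Real.sqrt_sq hNlam0.le]
    rw [e1, e2]
    exact Real.sqrt_le_sqrt hkey2
  -- exponent comparison
  have hgmono : (n : ℝ) - (n : ℝ) * (Real.log n - Real.log lam) - lam
      ≤ -(lam * poissonRate δ) := by
    have h1 := g_antitone hlam0 (Set.mem_Ici.mpr hlx.le)
      (Set.mem_Ici.mpr (hlx.le.trans hxn)) hxn
    have h2 : x - x * (Real.log x - Real.log lam) - lam = -(lam * poissonRate δ) := by
      have hlog : Real.log x = Real.log lam + Real.log (1 + δ) := by
        rw [hxdef, Real.log_mul (ne_of_gt hlam0) (by positivity)]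
      rw [hlog, hxdef]
      unfold poissonRate
      ring
    simp only at h1
    linarith
  -- assemble
  have hn0R : (0:ℝ) < (n:ℝ) := by linarith [hxn]
  have hsq2πn : 0 < Real.sqrt (2 * Real.pi * (n:ℝ)) := Real.sqrt_pos.mpr (by positivity)
  have hsqlm : 0 < Real.sqrt (lam * m) := Real.sqrt_pos.mpr (by positivity)
  have step1 : poissonTail lam x ≤ poissonProb lam n * (N / (N - lam)) := by
    have h := tail_le hlam0 n hxn hlow (by rw [hNdef] at hNlam'; exact hNlam')
    rw [hNdef]
    exact h
  have step2 : poissonProb lam n * (N / (N - lam)) ≤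
      Real.exp (-(lam * poissonRate δ)) / Real.sqrt (2 * Real.pi * (n:ℝ)) * (N / (N - lam)) := by
    apply mul_le_mul_of_nonneg_right _ (div_nonneg hN0.le hNlam0.le)
    refine (prob_le_exp hlam0 n hn1).trans ?_
    exact (div_le_div_iff_of_pos_right hsq2πn).mpr (Real.exp_le_exp.mpr hgmono)
  have step3 : Real.exp (-(lam * poissonRate δ)) / Real.sqrt (2 * Real.pi * (n:ℝ)) * (N / (N - lam))
      ≤ Real.exp (-(lam * poissonRate δ)) / Real.sqrt (lam * m) := by
    have hd1 : (0:ℝ) < Real.sqrt (2 * Real.pi * (n:ℝ)) * (N - lam) := mul_pos hsq2πn hNlam0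
    have hfrac : N / (Real.sqrt (2 * Real.pi * (n:ℝ)) * (N - lam)) ≤ 1 / Real.sqrt (lam * m) := by
      rw [div_le_div_iff₀ hd1 hsqlm, one_mul, mul_comm N]
      exact hkey
    calc Real.exp (-(lam * poissonRate δ)) / Real.sqrt (2 * Real.pi * (n:ℝ)) * (N / (N - lam))
        = Real.exp (-(lam * poissonRate δ)) * (N / (Real.sqrt (2 * Real.pi * (n:ℝ)) * (N - lam))) := by
          rw [div_mul_div_comm, mul_div_assoc]
      _ ≤ Real.exp (-(lam * poissonRate δ)) * (1 / Real.sqrt (lam * m)) :=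
          mul_le_mul_of_nonneg_left hfrac (Real.exp_nonneg _)
      _ = Real.exp (-(lam * poissonRate δ)) / Real.sqrt (lam * m) := by rw [mul_one_div]
  exact step1.trans (step2.trans step3)
end

section
/- Let X ~ Poisson(λ) and δ ≥ 1/√λ with λ(1+δ) an integer. There exists a universal constant c > 0 such that for all sufficiently large λ, P(X ≥ λ(1+δ)) ≥ c · e^{−λ h(δ)} / √(λ · min{δ, δ²}), where h(δ) = (1+δ)log(1+δ) − δ. -/
open Real Nat in
lemma fact_le (n : ℕ) (hn : 1 ≤ n) :
    (Nat.factorial n : ℝ) ≤ exp 1 * Real.sqrt n * (n / exp 1) ^ n := by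
  obtain ⟨m, rfl⟩ := Nat.exists_eq_add_of_le hn
  have h1 : Stirling.stirlingSeq (1 + m) ≤ Stirling.stirlingSeq 1 := by
    have := Stirling.stirlingSeq'_antitone (Nat.zero_le m)
    simpa [Nat.succ_eq_add_one, Nat.add_comm] using this
  rw [Stirling.stirlingSeq_one] at h1
  have hpos : 0 < Real.sqrt (2 * (1 + m : ℕ) : ℝ) * ((1 + m : ℕ) / exp 1) ^ (1 + m) := by
    positivity
  have h2 : (Nat.factorial (1 + m) : ℝ) =
      Stirling.stirlingSeq (1 + m) * (Real.sqrt (2 * (1 + m : ℕ) : ℝ) * ((1 + m : ℕ) / exp 1) ^ (1 + m)) := by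
    rw [Stirling.stirlingSeq, div_mul_cancel₀ _ (ne_of_gt hpos)]
  rw [h2]
  calc Stirling.stirlingSeq (1 + m) * (Real.sqrt (2 * (1 + m : ℕ) : ℝ) * ((1 + m : ℕ) / exp 1) ^ (1 + m))
      ≤ (exp 1 / Real.sqrt 2) * (Real.sqrt (2 * (1 + m : ℕ) : ℝ) * ((1 + m : ℕ) / exp 1) ^ (1 + m)) := by
        exact mul_le_mul_of_nonneg_right h1 (le_of_lt hpos)
    _ = exp 1 * Real.sqrt (1 + m : ℕ) * ((1 + m : ℕ) / exp 1) ^ (1 + m) := by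
        rw [Real.sqrt_mul (by norm_num)]
        field_simp

open Real in
lemma prob_ge (lam : ℝ) (hl : 0 < lam) (n : ℕ) (hn : 1 ≤ n) :
    exp (-lam + n - n * Real.log (n / lam)) / (exp 1 * Real.sqrt n) ≤ poissonProb lam n := by
  have hnR : (0:ℝ) < n := by exact_mod_cast hn
  have hfpos : (0:ℝ) < Nat.factorial n := by exact_mod_cast Nat.factorial_pos n
  have hup := fact_le n hn
  have hb : (0:ℝ) < exp 1 * Real.sqrt n := by positivity
  have e2 : lam ^ n = exp ((n:ℝ) * log lam) := by rw [Real.exp_nat_mul, Real.exp_log hl]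
  have e4 : ((n:ℝ)/exp 1) ^ n = exp ((n:ℝ) * (log n - 1)) := by
    rw [Real.exp_nat_mul, Real.exp_sub, Real.exp_log hnR]
  have key : exp (-lam + n - n * Real.log (n / lam)) * (Nat.factorial n : ℝ) ≤
      exp (-lam) * lam ^ n * (exp 1 * Real.sqrt n) := by
    calc exp (-lam + n - n * Real.log (n / lam)) * (Nat.factorial n : ℝ)
        ≤ exp (-lam + n - n * Real.log (n / lam)) * (exp 1 * Real.sqrt n * (n / exp 1) ^ n) := by
          exact mul_le_mul_of_nonneg_left hup (le_of_lt (exp_pos _))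
      _ = exp (-lam + n - n * Real.log (n / lam)) * exp ((n:ℝ) * (log n - 1)) * (exp 1 * Real.sqrt n) := by
          rw [e4]; ring
      _ = exp (-lam) * lam ^ n * (exp 1 * Real.sqrt n) := by
          rw [← Real.exp_add, e2, ← Real.exp_add, Real.log_div hnR.ne' hl.ne']
          congr 2
          ring
  rw [poissonProb, div_le_div_iff₀ hb hfpos]
  exact key

section Aux
open Real
lemma prob_nonneg (lam : ℝ) (hl : 0 ≤ lam) (n : ℕ) : 0 ≤ poissonProb lam n := by
  unfold poissonProb; positivity

lemma fact_add_le (k i : ℕ) : (Nat.factorial (k+i) : ℝ) ≤ Nat.factorial k * (k+i:ℕ)^i := by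
  induction i with
  | zero => simp
  | succ i ih =>
    have h1 : (Nat.factorial (k+i+1) : ℝ) = (k+i+1) * Nat.factorial (k+i) := by
      push_cast [Nat.factorial_succ]; ring
    have h2 : ((k+i:ℕ):ℝ)^i ≤ ((k+i+1:ℕ):ℝ)^i := by
      apply pow_le_pow_left₀ (by positivity)
      push_cast; linarith
    calc (Nat.factorial (k+i+1) : ℝ) = (k+i+1) * Nat.factorial (k+i) := h1
      _ ≤ (k+i+1) * (Nat.factorial k * (k+i:ℕ)^i) := by
          apply mul_le_mul_of_nonneg_left ih (by positivity)
      _ ≤ (k+i+1) * (Nat.factorial k * (k+i+1:ℕ)^i) := by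
          apply mul_le_mul_of_nonneg_left _ (by positivity)
          apply mul_le_mul_of_nonneg_left _ (by positivity)
          push_cast at h2 ⊢; exact h2
      _ = Nat.factorial k * ((k+i+1:ℕ):ℝ)^(i+1) := by push_cast; ring

lemma prob_ratio (lam : ℝ) (hl : 0 < lam) (k i : ℕ) :
    poissonProb lam k * (lam/(k+i:ℕ))^i ≤ poissonProb lam (k+i) := by
  have hki : (0:ℝ) < (k+i:ℕ) ∨ i = 0 := by
    rcases Nat.eq_zero_or_pos (k+i) with h | h
    · right; omega
    · left; exact_mod_cast h
  rcases hki with hki | rfl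
  · have hf1 : (0:ℝ) < Nat.factorial k := by exact_mod_cast Nat.factorial_pos k
    have hf2 : (0:ℝ) < Nat.factorial (k+i) := by exact_mod_cast Nat.factorial_pos (k+i)
    unfold poissonProb
    rw [div_mul_eq_mul_div, div_pow, div_le_div_iff₀ hf1 hf2,
      show Real.exp (-lam) * lam ^ k * (lam ^ i / ((k+i:ℕ):ℝ) ^ i) * (Nat.factorial (k+i):ℝ)
        = Real.exp (-lam) * lam ^ k * (lam ^ i) * (Nat.factorial (k+i):ℝ) / ((k+i:ℕ):ℝ)^i from by ring,
      div_le_iff₀ (by positivity)]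
    calc Real.exp (-lam) * lam ^ k * (lam ^ i) * (Nat.factorial (k+i):ℝ)
        ≤ Real.exp (-lam) * lam ^ k * (lam ^ i) * (Nat.factorial k * (k+i:ℕ)^i) :=
          mul_le_mul_of_nonneg_left (fact_add_le k i) (by positivity)
      _ = Real.exp (-lam) * lam ^ (k+i) * (Nat.factorial k) * (((k+i:ℕ):ℝ) ^ i) := by
          rw [pow_add]; push_cast; ring
  · simp

lemma summable_tail (lam : ℝ) (hl : 0 < lam) (x : ℝ) :
    Summable (fun n : ℕ => if x ≤ (n:ℝ) then poissonProb lam n else 0) := by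
  apply Summable.of_nonneg_of_le
    (fun n => by split_ifs; exacts [prob_nonneg lam hl.le n, le_rfl])
    (fun n => ?_) (((Real.summable_pow_div_factorial lam).mul_left (Real.exp (-lam))))
  split_ifs with h
  · rw [poissonProb, mul_div_assoc]
  · positivity

lemma tail_ge (lam : ℝ) (hl : 0 < lam) (k m : ℕ) (hk : lam ≤ k) :
    (m+1 : ℝ) * (poissonProb lam k * (lam/((k+m:ℕ):ℝ))^m) ≤ poissonTail lam k := by
  set b := poissonProb lam k * (lam/((k+m:ℕ):ℝ))^m with hb
  have hkm : (0:ℝ) < ((k+m:ℕ):ℝ) := lt_of_lt_of_le hl (by exact_mod_cast hk.trans (by exact_mod_cast Nat.cast_le.mpr (Nat.le_add_right k m)))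
  have hterm : ∀ j ∈ Finset.Icc k (k+m), b ≤ (if (k:ℝ) ≤ (j:ℝ) then poissonProb lam j else 0) := by
    intro j hj
    rw [Finset.mem_Icc] at hj
    rw [if_pos (by exact_mod_cast hj.1)]
    obtain ⟨i, rfl⟩ := Nat.exists_eq_add_of_le hj.1
    have him : i ≤ m := by omega
    have hki : lam ≤ ((k+i:ℕ):ℝ) := hk.trans (by exact_mod_cast Nat.cast_le.mpr (Nat.le_add_right k i))
    have hbase1 : lam/((k+m:ℕ):ℝ) ≤ lam/((k+i:ℕ):ℝ) := by
      apply div_le_div_of_nonneg_left hl.le (lt_of_lt_of_le hl hki)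
      exact_mod_cast Nat.add_le_add_left him k
    have hbase2 : lam/((k+i:ℕ):ℝ) ≤ 1 := (div_le_one (lt_of_lt_of_le hl hki)).mpr hki
    have hpow : (lam/((k+m:ℕ):ℝ))^m ≤ (lam/((k+i:ℕ):ℝ))^i :=
      (pow_le_pow_left₀ (by positivity) hbase1 m).trans
        (pow_le_pow_of_le_one (by positivity) hbase2 him)
    calc b ≤ poissonProb lam k * (lam/((k+i:ℕ):ℝ))^i := by
          exact mul_le_mul_of_nonneg_left hpow (prob_nonneg lam hl.le k)
      _ ≤ poissonProb lam (k+i) := prob_ratio lam hl k i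
  have hcard : (Finset.Icc k (k+m)).card = m + 1 := by
    rw [Nat.card_Icc]; omega
  calc (m+1 : ℝ) * b = (Finset.Icc k (k+m)).card • b := by rw [hcard]; push_cast; ring
    _ ≤ ∑ j ∈ Finset.Icc k (k+m), (if (k:ℝ) ≤ (j:ℝ) then poissonProb lam j else 0) :=
        Finset.card_nsmul_le_sum _ _ _ hterm
    _ ≤ poissonTail lam k := by
        apply Summable.sum_le_tsum _ (fun j _ => ?_) (summable_tail lam hl k)
        split_ifs
        exacts [prob_nonneg lam hl.le j, le_rfl]

end Aux

set_option maxHeartbeats 2000000 in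
/-- Sharp Poisson lower tail bound: there is a universal constant `c > 0` such that for all
sufficiently large `λ`, for `δ ≥ 1/√λ` with `λ(1+δ)` an integer,
`P(X ≥ λ(1+δ)) ≥ c·e^{−λ h(δ)} / √(λ min{δ,δ²})`. -/
theorem sharp_poisson_tail_lower :
    ∃ c : ℝ, 0 < c ∧ ∃ Λ : ℝ, ∀ lam : ℝ, Λ ≤ lam → ∀ δ : ℝ, 1 / Real.sqrt lam ≤ δ →
      (∃ k : ℕ, (k : ℝ) = lam * (1 + δ)) →
      c * Real.exp (-(lam * poissonRate δ)) / Real.sqrt (lam * min δ (δ ^ 2)) ≤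
        poissonTail lam (lam * (1 + δ)) := by
  refine ⟨Real.exp (-7) / 2, by positivity, 1, ?_⟩
  rintro lam hlam δ hδ ⟨k, hk⟩
  have hl : (0:ℝ) < lam := lt_of_lt_of_le one_pos hlam
  have hs1 : 1 ≤ Real.sqrt lam := by
    rw [show (1:ℝ) = Real.sqrt 1 from (Real.sqrt_one).symm]
    exact Real.sqrt_le_sqrt hlam
  have hsp : (0:ℝ) < Real.sqrt lam := lt_of_lt_of_le one_pos hs1
  have hssq : Real.sqrt lam * Real.sqrt lam = lam := Real.mul_self_sqrt hl.le
  have hδ0 : 0 < δ := lt_of_lt_of_le (by positivity) hδ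
  have hδs : 1 ≤ δ * Real.sqrt lam := (div_le_iff₀ hsp).mp hδ
  have hkR : (1:ℝ) ≤ (k:ℝ) := by rw [hk]; nlinarith
  have hk1 : 1 ≤ k := by exact_mod_cast hkR
  have hlamk : lam ≤ (k:ℝ) := by rw [hk]; nlinarith
  have htp : (0:ℝ) < Real.sqrt k := Real.sqrt_pos.mpr (by linarith)
  have hrate : -lam + (k:ℝ) - (k:ℝ) * Real.log ((k:ℝ)/lam) = -(lam * poissonRate δ) := by
    rw [hk, poissonRate, show lam*(1+δ)/lam = 1+δ from by field_simp]
    ring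
  have hprob := prob_ge lam hl k hk1
  rw [hrate] at hprob
  set E := Real.exp (-(lam * poissonRate δ)) with hE
  have hEpos : 0 < E := Real.exp_pos _
  rw [← hk]
  rcases le_or_gt 1 δ with hδ1 | hδ1
  · -- large δ
    rw [min_eq_left (by nlinarith : δ ≤ δ^2)]
    have htail := tail_ge lam hl k 0 hlamk
    simp only [Nat.add_zero, pow_zero, mul_one, Nat.cast_ofNat, Nat.cast_zero] at htail
    norm_num at htail
    have hsqk : Real.sqrt k ≤ Real.sqrt 2 * Real.sqrt (lam * δ) := by
      rw [← Real.sqrt_mul (by norm_num)]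
      apply Real.sqrt_le_sqrt
      rw [hk]; nlinarith
    have hmin_pos : (0:ℝ) < Real.sqrt (lam * δ) := Real.sqrt_pos.mpr (by positivity)
    have key : Real.exp (-7)/2 * E / Real.sqrt (lam * δ) ≤ E / (Real.exp 1 * Real.sqrt k) := by
      rw [div_le_div_iff₀ hmin_pos (by positivity)]
      have he1 : Real.exp (-7) * Real.exp 1 = Real.exp (-6) := by
        rw [← Real.exp_add]; norm_num
      have he2 : Real.exp (-6) ≤ 1 := Real.exp_le_one_iff.mpr (by norm_num)
      have hs2 : Real.sqrt 2 ≤ 2 := by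
        nlinarith [Real.sq_sqrt (by norm_num : (0:ℝ) ≤ 2), Real.sqrt_nonneg (2:ℝ)]
      have h1 : Real.sqrt k ≤ 2 * Real.sqrt (lam * δ) := by
        nlinarith [Real.sqrt_nonneg (lam*δ)]
      have h2 : E * Real.sqrt k ≤ 2 * (E * Real.sqrt (lam * δ)) := by nlinarith
      calc Real.exp (-7)/2 * E * (Real.exp 1 * Real.sqrt k)
          = (Real.exp (-7) * Real.exp 1) * (E * Real.sqrt k)/2 := by ring
        _ = Real.exp (-6) * (E * Real.sqrt k)/2 := by rw [he1]
        _ ≤ 1 * (2 * (E * Real.sqrt (lam * δ)))/2 := by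
            apply div_le_div_of_nonneg_right ?_ (by norm_num)
            exact mul_le_mul he2 h2 (by positivity) (by norm_num)
        _ = E * Real.sqrt (lam * δ) := by ring
    calc Real.exp (-7)/2 * E / Real.sqrt (lam * δ) ≤ E / (Real.exp 1 * Real.sqrt k) := key
      _ ≤ poissonProb lam k := hprob
      _ ≤ poissonTail lam k := htail
  · -- small δ
    rw [min_eq_right (by nlinarith : δ^2 ≤ δ)]
    have hsq : Real.sqrt (lam * δ^2) = Real.sqrt lam * δ := by
      rw [Real.sqrt_mul hl.le, Real.sqrt_sq hδ0.le]
    rw [hsq]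
    obtain ⟨m, hm1, hm2⟩ : ∃ m : ℕ, 1/δ ≤ (m:ℝ) ∧ (m:ℝ) ≤ 1/δ + 1 :=
      ⟨Nat.ceil (1/δ), Nat.le_ceil _, (Nat.ceil_lt_add_one (by positivity)).le⟩
    have hinvδ : 1/δ ≤ Real.sqrt lam := by
      rw [div_le_iff₀ hδ0]
      linarith [hδs]
    have hslam : Real.sqrt lam ≤ lam * δ := by
      have h := mul_le_mul_of_nonneg_left hδs hsp.le
      rw [mul_one] at h
      calc Real.sqrt lam ≤ Real.sqrt lam * (δ * Real.sqrt lam) := h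
        _ = Real.sqrt lam * Real.sqrt lam * δ := by ring
        _ = lam * δ := by rw [hssq]
    have hmlam : (m:ℝ) ≤ 2 * (lam * δ) := by linarith
    have hkm : ((k+m:ℕ):ℝ) ≤ lam * (1 + 3*δ) := by
      push_cast
      rw [hk]; linarith
    have hkmpos : (0:ℝ) < ((k+m:ℕ):ℝ) := by
      push_cast; linarith
    have hbase : 1/(1+3*δ) ≤ lam/((k+m:ℕ):ℝ) := by
      rw [div_le_div_iff₀ (by linarith) hkmpos]
      rw [one_mul]; exact hkm
    have hpow1 : (1/(1+3*δ))^m ≤ (lam/((k+m:ℕ):ℝ))^m :=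
      pow_le_pow_left₀ (by positivity) hbase m
    have hexp6 : (1+3*δ)^m ≤ Real.exp 6 := by
      calc (1+3*δ)^m ≤ (Real.exp (3*δ))^m := by
            apply pow_le_pow_left₀ (by linarith)
            linarith [Real.add_one_le_exp (3*δ)]
        _ = Real.exp ((m:ℝ) * (3*δ)) := by rw [← Real.exp_nat_mul]
        _ ≤ Real.exp 6 := by
            apply Real.exp_le_exp.mpr
            have : (m:ℝ) * (3*δ) ≤ (1/δ + 1) * (3*δ) := by
              apply mul_le_mul_of_nonneg_right hm2 (by positivity)
            calc (m:ℝ) * (3*δ) ≤ (1/δ + 1) * (3*δ) := this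
              _ = 3 + 3*δ := by field_simp
              _ ≤ 6 := by linarith
    have hρ : Real.exp (-6) ≤ (lam/((k+m:ℕ):ℝ))^m := by
      refine le_trans ?_ hpow1
      rw [one_div, inv_pow, Real.exp_neg]
      apply inv_anti₀ (by positivity) hexp6
    have htail := tail_ge lam hl k m hlamk
    have hchain : (1/δ) * (E / (Real.exp 1 * Real.sqrt k) * Real.exp (-6)) ≤
        (m+1 : ℝ) * (poissonProb lam k * (lam/((k+m:ℕ):ℝ))^m) := by
      apply mul_le_mul (by linarith) _ (by positivity) (by positivity)
      exact mul_le_mul hprob hρ (Real.exp_pos _).le (prob_nonneg lam hl.le k)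
    have hsqk : Real.sqrt k ≤ 2 * Real.sqrt lam := by
      rw [show 2 * Real.sqrt lam = Real.sqrt (4 * lam) from by
        rw [show (4:ℝ)*lam = 2^2*lam by ring, Real.sqrt_mul (by norm_num), Real.sqrt_sq (by norm_num)]]
      apply Real.sqrt_le_sqrt
      rw [hk]; nlinarith
    have key : Real.exp (-7)/2 * E / (Real.sqrt lam * δ) ≤
        (1/δ) * (E / (Real.exp 1 * Real.sqrt k) * Real.exp (-6)) := by
      have he1 : Real.exp (-6) / Real.exp 1 = Real.exp (-7) := by
        rw [← Real.exp_sub]; norm_num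
      have hrhs : (1/δ) * (E / (Real.exp 1 * Real.sqrt k) * Real.exp (-6)) =
          Real.exp (-7) * E / (δ * Real.sqrt k) := by
        rw [← he1]; field_simp
      rw [hrhs, div_le_div_iff₀ (by positivity) (by positivity)]
      have h := mul_le_mul_of_nonneg_left hsqk
        (by positivity : (0:ℝ) ≤ Real.exp (-7) * E * δ / 2)
      calc Real.exp (-7)/2 * E * (δ * Real.sqrt k)
          = Real.exp (-7) * E * δ / 2 * Real.sqrt k := by ring
        _ ≤ Real.exp (-7) * E * δ / 2 * (2 * Real.sqrt lam) := h
        _ = Real.exp (-7) * E * (Real.sqrt lam * δ) := by ring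
    calc Real.exp (-7)/2 * E / (Real.sqrt lam * δ)
        ≤ (1/δ) * (E / (Real.exp 1 * Real.sqrt k) * Real.exp (-6)) := key
      _ ≤ (m+1 : ℝ) * (poissonProb lam k * (lam/((k+m:ℕ):ℝ))^m) := hchain
      _ ≤ poissonTail lam k := htail
end

section
/- Let M be a real symmetric n×n matrix, λ ∈ ℝ, and Δ, ε > 0 with 5ε ≤ Δ. Assume M has a unique eigenvalue μ in the interval [λ−Δ, λ+Δ], with corresponding unit eigenvector w. If v is a unit vector with ‖(M − λI)v‖ ≤ ε, then μ − λ = ⟨v, (M−λI)v⟩ + O(ε²/Δ) and, for a suitable choice of sign of w, ‖w − v‖ = O(ε/Δ). Explicitly, there is an absolute constant C with |μ − λ − ⟨v,(M−λ)v⟩| ≤ C ε²/Δ and min_{σ=±1} ‖σw − v‖ ≤ C ε/Δ. -/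
open scoped RealInnerProductSpace

/-- The action of a matrix on a vector of `EuclideanSpace ℝ (Fin n)`. -/
noncomputable def matVec {n : ℕ} (M : Matrix (Fin n) (Fin n) ℝ)
    (v : EuclideanSpace ℝ (Fin n)) : EuclideanSpace ℝ (Fin n) :=
  (WithLp.equiv 2 (Fin n → ℝ)).symm (M.mulVec (WithLp.equiv 2 (Fin n → ℝ) v))

/-- Approximate eigenvalue/eigenvector lemma: let `M` be a real symmetric `n×n` matrix and
`Δ, ε > 0` with `5ε ≤ Δ`. Suppose `M` has a unique eigenvalue `μ` (with multiplicity) in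
`[λ−Δ, λ+Δ]` with unit eigenvector `w`. If `v` is a unit vector with `‖(M−λ)v‖ ≤ ε`, then
`|μ − λ − ⟨v,(M−λ)v⟩| ≤ Cε²/Δ` and, up to sign, `‖w − v‖ ≤ Cε/Δ`, for an absolute
constant `C`. -/
theorem approximate_eigenvector :
    ∃ C : ℝ, 0 < C ∧
      ∀ (n : ℕ) (M : Matrix (Fin n) (Fin n) ℝ) (hM : M.IsHermitian)
        (lam Δ ε μ : ℝ) (w v : EuclideanSpace ℝ (Fin n)),
        0 < ε → 5 * ε ≤ Δ →
        (∃! i : Fin n, hM.eigenvalues i ∈ Set.Icc (lam - Δ) (lam + Δ)) →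
        μ ∈ Set.Icc (lam - Δ) (lam + Δ) →
        matVec M w = μ • w → ‖w‖ = 1 → ‖v‖ = 1 →
        ‖matVec M v - lam • v‖ ≤ ε →
        |μ - lam - ⟪v, matVec M v - lam • v⟫| ≤ C * ε ^ 2 / Δ ∧
          (‖w - v‖ ≤ C * ε / Δ ∨ ‖(-w) - v‖ ≤ C * ε / Δ) := by
  refine ⟨2, by norm_num, ?_⟩
  intro n M hM lam Δ ε μ w v hε h5 huniq hμI hww hw1 hv1 hvb
  have hΔ : 0 < Δ := lt_of_lt_of_le (by linarith) h5
  set b := hM.eigenvectorBasis with hb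
  set d := hM.eigenvalues with hd
  have heig : ∀ i, matVec M (b i) = d i • b i := by
    intro i
    have h := hM.mulVec_eigenvectorBasis i
    ext j
    simp [matVec, h, hb, hd]
  have hsymm : ∀ x y : EuclideanSpace ℝ (Fin n), ⟪matVec M x, y⟫ = ⟪x, matVec M y⟫ := by
    intro x y
    exact (Matrix.isHermitian_iff_isSymmetric.1 hM) x y
  have hcoef : ∀ (i : Fin n) (x : EuclideanSpace ℝ (Fin n)),
      ⟪b i, matVec M x⟫ = d i * ⟪b i, x⟫ := by
    intro i x
    rw [← hsymm, heig i, real_inner_smul_left]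
  have hsumnorm : ∀ x : EuclideanSpace ℝ (Fin n), ∑ i, ⟪b i, x⟫ ^ 2 = ‖x‖ ^ 2 := by
    intro x
    have h := b.sum_inner_mul_inner x x
    rw [real_inner_self_eq_norm_sq] at h
    rw [← h]
    refine Finset.sum_congr rfl fun i _ => ?_
    rw [real_inner_comm x (b i)]; ring
  have hc2 : ∑ i, ⟪b i, v⟫ ^ 2 = 1 := by rw [hsumnorm v, hv1]; norm_num
  have hrc : ∀ i, ⟪b i, matVec M v - lam • v⟫ = (d i - lam) * ⟪b i, v⟫ := by
    intro i
    rw [inner_sub_right, hcoef, real_inner_smul_right]; ring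
  have hrnorm : ∑ i, ((d i - lam) * ⟪b i, v⟫) ^ 2 ≤ ε ^ 2 := by
    have h1 := hsumnorm (matVec M v - lam • v)
    simp_rw [hrc] at h1
    rw [h1]
    exact pow_le_pow_left₀ (norm_nonneg _) hvb 2
  obtain ⟨i₀, hi₀, hi₀u⟩ := huniq
  have hwμ' : ∀ i, ⟪b i, w⟫ ≠ 0 → d i = μ := by
    intro i hi
    have h1 : μ * ⟪b i, w⟫ = d i * ⟪b i, w⟫ := by
      have h2 := hcoef i w
      rw [hww, real_inner_smul_right] at h2
      exact h2
    rcases mul_eq_zero.1 (show (d i - μ) * ⟪b i, w⟫ = 0 by linear_combination -h1) with h | h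
    · linarith
    · exact absurd h hi
  have hwc2 : ∑ i, ⟪b i, w⟫ ^ 2 = 1 := by rw [hsumnorm w, hw1]; norm_num
  have hexists : ∃ i, ⟪b i, w⟫ ≠ 0 := by
    by_contra h
    push_neg at h
    rw [Finset.sum_eq_zero (fun i _ => by rw [h i]; ring)] at hwc2
    norm_num at hwc2
  obtain ⟨j, hj⟩ := hexists
  have hμd : μ = d i₀ := by
    have hdj := hwμ' j hj
    have hmem : d j ∈ Set.Icc (lam - Δ) (lam + Δ) := by rw [hdj]; exact hμI
    have hji := hi₀u j hmem
    rw [← hji, hdj]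
  have hwz : ∀ i, i ≠ i₀ → ⟪b i, w⟫ = 0 := by
    intro i hi
    by_contra h
    have hmem : d i ∈ Set.Icc (lam - Δ) (lam + Δ) := by rw [hwμ' i h]; exact hμI
    exact hi (hi₀u i hmem)
  have hwrep : w = ⟪b i₀, w⟫ • b i₀ := by
    conv_lhs => rw [← b.sum_repr' w]
    exact Finset.sum_eq_single i₀ (fun i _ hi => by rw [hwz i hi, zero_smul])
      (fun h' => absurd (Finset.mem_univ i₀) h')
  have hwc1 : ⟪b i₀, w⟫ ^ 2 = 1 := by
    rw [← hwc2]
    exact (Finset.sum_eq_single (f := fun i => (⟪b i, w⟫ : ℝ) ^ 2) i₀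
      (fun i _ hi => by show (⟪b i, w⟫ : ℝ) ^ 2 = 0; rw [hwz i hi]; ring)
      (fun h' => absurd (Finset.mem_univ i₀) h')).symm
  have hwcabs : |⟪b i₀, w⟫| = 1 := by
    rw [← Real.sqrt_one, ← hwc1, ← sq_abs, Real.sqrt_sq (abs_nonneg _)]
  have hwv : ⟪w, v⟫ = ⟪b i₀, w⟫ * ⟪b i₀, v⟫ := by
    nth_rewrite 1 [hwrep]
    rw [real_inner_smul_left]
  have hgap : ∀ i, i ≠ i₀ → Δ ≤ |d i - lam| := by
    intro i hi
    have hni : d i ∉ Set.Icc (lam - Δ) (lam + Δ) := fun h => hi (hi₀u i h)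
    rw [Set.mem_Icc, not_and_or, not_le, not_le] at hni
    rcases hni with h | h
    · rw [abs_of_neg (by linarith)]; linarith
    · rw [abs_of_pos (by linarith)]; linarith
  have herase : ∀ f : Fin n → ℝ, (∀ i, 0 ≤ f i) →
      ∑ i ∈ Finset.univ.erase i₀, f i ≤ ∑ i, f i :=
    fun f hf => Finset.sum_le_sum_of_subset_of_nonneg (Finset.erase_subset _ _)
      (fun i _ _ => hf i)
  have hS1 : Δ ^ 2 * ∑ i ∈ Finset.univ.erase i₀, ⟪b i, v⟫ ^ 2 ≤ ε ^ 2 := by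
    calc Δ ^ 2 * ∑ i ∈ Finset.univ.erase i₀, ⟪b i, v⟫ ^ 2
        = ∑ i ∈ Finset.univ.erase i₀, Δ ^ 2 * ⟪b i, v⟫ ^ 2 := Finset.mul_sum _ _ _
      _ ≤ ∑ i ∈ Finset.univ.erase i₀, ((d i - lam) * ⟪b i, v⟫) ^ 2 := by
          refine Finset.sum_le_sum fun i hi => ?_
          have h1 := hgap i (Finset.ne_of_mem_erase hi)
          have h2 : Δ ^ 2 ≤ (d i - lam) ^ 2 := by
            rw [← sq_abs (d i - lam)]
            exact pow_le_pow_left₀ hΔ.le h1 2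
          calc Δ ^ 2 * ⟪b i, v⟫ ^ 2 ≤ (d i - lam) ^ 2 * ⟪b i, v⟫ ^ 2 :=
                mul_le_mul_of_nonneg_right h2 (sq_nonneg _)
            _ = ((d i - lam) * ⟪b i, v⟫) ^ 2 := by ring
      _ ≤ ∑ i, ((d i - lam) * ⟪b i, v⟫) ^ 2 := herase _ (fun i => sq_nonneg _)
      _ ≤ ε ^ 2 := hrnorm
  have hS2 : Δ * ∑ i ∈ Finset.univ.erase i₀, |d i - lam| * ⟪b i, v⟫ ^ 2 ≤ ε ^ 2 := by
    calc Δ * ∑ i ∈ Finset.univ.erase i₀, |d i - lam| * ⟪b i, v⟫ ^ 2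
        = ∑ i ∈ Finset.univ.erase i₀, Δ * (|d i - lam| * ⟪b i, v⟫ ^ 2) := Finset.mul_sum _ _ _
      _ ≤ ∑ i ∈ Finset.univ.erase i₀, ((d i - lam) * ⟪b i, v⟫) ^ 2 := by
          refine Finset.sum_le_sum fun i hi => ?_
          have h1 := hgap i (Finset.ne_of_mem_erase hi)
          calc Δ * (|d i - lam| * ⟪b i, v⟫ ^ 2)
              ≤ |d i - lam| * (|d i - lam| * ⟪b i, v⟫ ^ 2) :=
                mul_le_mul_of_nonneg_right h1 (by positivity)
            _ = |d i - lam| ^ 2 * ⟪b i, v⟫ ^ 2 := by ring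
            _ = ((d i - lam) * ⟪b i, v⟫) ^ 2 := by rw [sq_abs]; ring
      _ ≤ ∑ i, ((d i - lam) * ⟪b i, v⟫) ^ 2 := herase _ (fun i => sq_nonneg _)
      _ ≤ ε ^ 2 := hrnorm
  have hvr : ⟪v, matVec M v - lam • v⟫ = ∑ i, (d i - lam) * ⟪b i, v⟫ ^ 2 := by
    rw [← b.sum_inner_mul_inner v (matVec M v - lam • v)]
    refine Finset.sum_congr rfl fun i _ => ?_
    rw [hrc i, real_inner_comm v (b i)]
    ring
  have hμlam : |μ - lam| ≤ Δ := by
    rw [Set.mem_Icc] at hμI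
    rw [abs_le]; constructor <;> linarith [hμI.1, hμI.2]
  constructor
  · have hkey : μ - lam - ⟪v, matVec M v - lam • v⟫
        = ∑ i ∈ Finset.univ.erase i₀, (μ - d i) * ⟪b i, v⟫ ^ 2 := by
      rw [hvr]
      have h1 : μ - lam = ∑ i, (μ - lam) * ⟪b i, v⟫ ^ 2 := by
        rw [← Finset.mul_sum, hc2, mul_one]
      rw [h1, ← Finset.sum_sub_distrib]
      rw [show (fun i => (μ - lam) * ⟪b i, v⟫ ^ 2 - (d i - lam) * ⟪b i, v⟫ ^ 2)
            = fun i => (μ - d i) * ⟪b i, v⟫ ^ 2 from funext fun i => by ring]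
      symm
      apply Finset.sum_erase
      rw [hμd]; ring
    rw [hkey]
    have habs : |∑ i ∈ Finset.univ.erase i₀, (μ - d i) * ⟪b i, v⟫ ^ 2|
        ≤ ∑ i ∈ Finset.univ.erase i₀, 2 * (|d i - lam| * ⟪b i, v⟫ ^ 2) := by
      refine (Finset.abs_sum_le_sum_abs _ _).trans (Finset.sum_le_sum fun i hi => ?_)
      have h1 := hgap i (Finset.ne_of_mem_erase hi)
      have h2 : |μ - d i| ≤ 2 * |d i - lam| := by
        have h3 := abs_sub_le μ lam (d i)
        rw [abs_sub_comm lam (d i)] at h3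
        linarith
      rw [abs_mul, abs_of_nonneg (sq_nonneg ⟪b i, v⟫)]
      calc |μ - d i| * ⟪b i, v⟫ ^ 2 ≤ 2 * |d i - lam| * ⟪b i, v⟫ ^ 2 :=
            mul_le_mul_of_nonneg_right h2 (sq_nonneg _)
        _ = 2 * (|d i - lam| * ⟪b i, v⟫ ^ 2) := by ring
    rw [le_div_iff₀ hΔ]
    calc |∑ i ∈ Finset.univ.erase i₀, (μ - d i) * ⟪b i, v⟫ ^ 2| * Δ
        ≤ (∑ i ∈ Finset.univ.erase i₀, 2 * (|d i - lam| * ⟪b i, v⟫ ^ 2)) * Δ :=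
          mul_le_mul_of_nonneg_right habs hΔ.le
      _ = 2 * (Δ * ∑ i ∈ Finset.univ.erase i₀, |d i - lam| * ⟪b i, v⟫ ^ 2) := by
          rw [← Finset.mul_sum]; ring
      _ ≤ 2 * ε ^ 2 := by linarith
  · have hsplit := Finset.add_sum_erase Finset.univ (fun i => (⟪b i, v⟫ : ℝ) ^ 2)
      (Finset.mem_univ i₀)
    rw [hc2] at hsplit
    have hcc : ⟪b i₀, v⟫ ^ 2 ≤ 1 := by
      have h := Finset.single_le_sum (f := fun i => ⟪b i, v⟫ ^ 2)
        (fun i _ => sq_nonneg _) (Finset.mem_univ i₀)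
      rw [hc2] at h
      exact h
    have hkey2 : ∀ u : EuclideanSpace ℝ (Fin n), ‖u‖ = 1 → ⟪u, v⟫ = |⟪b i₀, v⟫| →
        ‖u - v‖ ≤ 2 * ε / Δ := by
      intro u hu huv
      have hn : ‖u - v‖ ^ 2 = 2 - 2 * |⟪b i₀, v⟫| := by
        rw [norm_sub_sq_real, hu, hv1, huv]; ring
      have habs1 : |⟪b i₀, v⟫| ≤ 1 := by
        rw [← Real.sqrt_one, ← Real.sqrt_sq (abs_nonneg ⟪b i₀, v⟫), sq_abs]
        exact Real.sqrt_le_sqrt hcc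
      have h7 : ⟪b i₀, v⟫ ^ 2 ≤ |⟪b i₀, v⟫| := by
        calc ⟪b i₀, v⟫ ^ 2 = |⟪b i₀, v⟫| * |⟪b i₀, v⟫| := by rw [← sq_abs]; ring
          _ ≤ 1 * |⟪b i₀, v⟫| := mul_le_mul_of_nonneg_right habs1 (abs_nonneg _)
          _ = |⟪b i₀, v⟫| := one_mul _
      have h1 : ‖u - v‖ ^ 2 ≤ 2 * (1 - ⟪b i₀, v⟫ ^ 2) := by
        rw [hn]; linarith only [h7]
      have h2 : Δ ^ 2 * (1 - ⟪b i₀, v⟫ ^ 2) ≤ ε ^ 2 := by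
        have h8 : 1 - ⟪b i₀, v⟫ ^ 2 = ∑ i ∈ Finset.univ.erase i₀, ⟪b i, v⟫ ^ 2 := by
          linarith only [hsplit]
        rw [h8]; exact hS1
      have h4 : ‖u - v‖ ^ 2 * Δ ^ 2 ≤ 2 * (1 - ⟪b i₀, v⟫ ^ 2) * Δ ^ 2 :=
        mul_le_mul_of_nonneg_right h1 (sq_nonneg Δ)
      have h3 : ‖u - v‖ ^ 2 ≤ (2 * ε / Δ) ^ 2 := by
        rw [div_pow, mul_pow, le_div_iff₀ (by positivity)]
        nlinarith [h4, h2, sq_nonneg ε]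
      exact (pow_le_pow_iff_left₀ (norm_nonneg _) (by positivity) two_ne_zero).1 h3
    have habsprod : |⟪b i₀, w⟫ * ⟪b i₀, v⟫| = |⟪b i₀, v⟫| := by
      rw [abs_mul, hwcabs, one_mul]
    rcases le_or_gt 0 ⟪w, v⟫ with h | h
    · left
      apply hkey2 w hw1
      rw [hwv, ← habsprod, abs_of_nonneg]
      rwa [hwv] at h
    · right
      apply hkey2 (-w) (by rw [norm_neg, hw1])
      rw [inner_neg_left, hwv, ← habsprod,
        abs_of_neg (show ⟪b i₀, w⟫ * ⟪b i₀, v⟫ < 0 by rwa [hwv] at h)]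
end

section
/- Let T be a finite tree rooted at x, with adjacency matrix A, and let λ > 0 be an eigenvalue with an eigenvector w that is nonzero at every vertex. Then λ satisfies the continued-fraction identity λ = Σ_{y₁∼x} 1/(λ − Σ_{y₂ child of y₁} 1/(λ − Σ_{y₃ child of y₂} 1/(λ − ···))), where the continued fraction terminates at the leaves (empty sums), and all denominators appearing are nonzero. -/
/-- In the graph `G` viewed as rooted at `x`, the children of `v`: neighbors of `v`
strictly farther from the root `x`. -/
noncomputable def rootedChildren {V : Type*} [Fintype V] [DecidableEq V] (G : SimpleGraph V)
    [DecidableRel G.Adj] (x v : V) : Finset V :=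
  (G.neighborFinset v).filter fun y => G.dist x v < G.dist x y

open SimpleGraph Walk

/-- In a tree, any path between two vertices has length equal to the distance. -/
lemma tree_isPath_length_eq_dist {V : Type*} {G : SimpleGraph V} (htree : G.IsTree)
    {u v : V} {p : G.Walk u v} (hp : p.IsPath) : p.length = G.dist u v := by
  obtain ⟨q, hq⟩ := htree.isConnected.exists_walk_length_eq_dist u v
  have hqp : q.IsPath := q.isPath_of_length_eq_dist hq
  have huniq := htree.existsUnique_path u v
  obtain ⟨r, -, hr⟩ := huniq
  rw [hr p hp, ← hr q hqp, hq]

/-- Existence and characterization of the parent of a non-root vertex in a tree. -/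
lemma tree_parent {V : Type*} [DecidableEq V] {G : SimpleGraph V} (htree : G.IsTree) (x : V) (v : V) :
    ∃ p : V, v ≠ x → (G.Adj p v ∧ G.dist x p + 1 = G.dist x v ∧
      ∀ u, G.Adj u v → ¬ G.dist x v < G.dist x u → u = p) := by
  by_cases hv : v = x
  · exact ⟨x, fun h => absurd hv h⟩
  obtain ⟨P, hPlen⟩ := htree.isConnected.exists_walk_length_eq_dist x v
  have hPpath : P.IsPath := P.isPath_of_length_eq_dist hPlen
  obtain ⟨p, hadj, r, hr⟩ := Walk.exists_eq_cons_of_ne hv P.reverse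
  have hPeq : P = r.reverse.concat hadj.symm := by
    have := congrArg Walk.reverse hr
    rw [Walk.reverse_reverse, Walk.reverse_cons] at this
    exact this
  have hrpath : r.IsPath := by
    have : P.reverse.IsPath := (Walk.isPath_reverse_iff P).mpr hPpath
    rw [hr, Walk.cons_isPath_iff] at this
    exact this.1
  have hqpath : r.reverse.IsPath := (Walk.isPath_reverse_iff r).mpr hrpath
  have hdistp : G.dist x p + 1 = G.dist x v := by
    have h1 : r.reverse.length = G.dist x p := tree_isPath_length_eq_dist htree hqpath
    have h2 : P.length = r.reverse.length + 1 := by rw [hPeq, Walk.length_concat]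
    omega
  refine ⟨p, fun _ => ⟨hadj.symm, hdistp, ?_⟩⟩
  intro u huv hnlt
  obtain ⟨Pu, hPulen⟩ := htree.isConnected.exists_walk_length_eq_dist x u
  have hPupath : Pu.IsPath := Pu.isPath_of_length_eq_dist hPulen
  have hvmem : v ∉ Pu.support := by
    intro hmem
    have htake : (Pu.takeUntil v hmem).IsPath := hPupath.takeUntil hmem
    have hdrop : (Pu.dropUntil v hmem).IsPath := hPupath.dropUntil hmem
    have h1 : (Pu.takeUntil v hmem).length = G.dist x v :=
      tree_isPath_length_eq_dist htree htake
    have h2 : (Pu.dropUntil v hmem).length = G.dist v u :=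
      tree_isPath_length_eq_dist htree hdrop
    have h3 : G.dist v u = 1 := SimpleGraph.dist_eq_one_iff_adj.mpr huv.symm
    have h4 : Pu.length = (Pu.takeUntil v hmem).length + (Pu.dropUntil v hmem).length := by
      conv_lhs => rw [← Walk.take_spec Pu hmem]
      rw [Walk.length_append]
    omega
  have hWpath : (Pu.concat huv).IsPath := by
    rw [← Walk.isPath_reverse_iff, Walk.reverse_concat, Walk.cons_isPath_iff]
    exact ⟨(Walk.isPath_reverse_iff Pu).mpr hPupath, by
      rwa [Walk.support_reverse, List.mem_reverse]⟩
  have huniq := htree.existsUnique_path x v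
  obtain ⟨Q, -, hQ⟩ := huniq
  have hPW : Pu.concat huv = r.reverse.concat hadj.symm := by
    rw [← hPeq, hQ (Pu.concat huv) hWpath, hQ P hPpath]
  obtain ⟨hup, -⟩ := Walk.concat_inj hPW
  exact hup

/-- Continued-fraction identity for eigenvalues of a tree: if `λ > 0` is an eigenvalue of
the adjacency matrix of a finite tree rooted at `x`, with eigenvector `w` nonzero at every
vertex, then there is a family `g` (the levels of the continued fraction, with
`g v = 1/(λ − Σ_{children y of v} g y)`, terminating with empty sums at leaves) whose
denominators are all nonzero and with `λ = Σ_{y ∼ x} g y`. -/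
theorem tree_eigenvalue_continued_fraction {V : Type*} [Fintype V] [DecidableEq V]
    (G : SimpleGraph V) [DecidableRel G.Adj] (x : V) (lam : ℝ) (w : V → ℝ)
    (htree : G.IsTree) (hlam : 0 < lam)
    (heig : (G.adjMatrix ℝ).mulVec w = lam • w)
    (hw : ∀ v : V, w v ≠ 0) :
    ∃ g : V → ℝ,
      (∀ v : V, v ≠ x →
        lam - ∑ y ∈ rootedChildren G x v, g y ≠ 0 ∧
        g v = 1 / (lam - ∑ y ∈ rootedChildren G x v, g y)) ∧
      lam = ∑ y ∈ G.neighborFinset x, g y := by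
  choose pa hpa using tree_parent htree x
  set g : V → ℝ := fun v => w v / w (pa v) with hg
  have heq : ∀ v : V, ∑ u ∈ G.neighborFinset v, w u = lam * w v := by
    intro v
    have := congrFun heig v
    simpa using this
  -- if v is adjacent to c and c is strictly farther from x, then v is the parent of c
  have hchild_parent : ∀ v c : V, G.Adj v c → G.dist x v < G.dist x c → pa c = v := by
    intro v c hadj hlt
    have hcx : c ≠ x := by
      intro h; subst h
      simp [SimpleGraph.dist_self] at hlt
    exact ((hpa c hcx).2.2 v hadj (by omega)).symm
  -- decomposition of the neighborhood of a non-root vertex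
  have hpart : ∀ v : V, v ≠ x →
      G.neighborFinset v = insert (pa v) (rootedChildren G x v) ∧
      pa v ∉ rootedChildren G x v := by
    intro v hv
    obtain ⟨hadj, hdist, huniq⟩ := hpa v hv
    have hnotchild : pa v ∉ rootedChildren G x v := by
      simp only [rootedChildren, Finset.mem_filter]
      rintro ⟨-, hlt⟩; omega
    refine ⟨?_, hnotchild⟩
    ext u
    simp only [Finset.mem_insert, rootedChildren, Finset.mem_filter,
      SimpleGraph.mem_neighborFinset]
    constructor
    · intro hu
      by_cases hlt : G.dist x v < G.dist x u
      · exact Or.inr ⟨hu, hlt⟩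
      · exact Or.inl (huniq u hu.symm hlt)
    · rintro (rfl | ⟨hu, -⟩)
      · exact hadj.symm
      · exact hu
  refine ⟨g, ?_, ?_⟩
  · intro v hv
    obtain ⟨hadj, hdist, huniq⟩ := hpa v hv
    obtain ⟨hins, hnotmem⟩ := hpart v hv
    have hsum : w (pa v) + ∑ c ∈ rootedChildren G x v, w c = lam * w v := by
      rw [← Finset.sum_insert hnotmem, ← hins, heq v]
    have hgc : ∀ c ∈ rootedChildren G x v, g c = w c / w v := by
      intro c hc
      simp only [rootedChildren, Finset.mem_filter, SimpleGraph.mem_neighborFinset] at hc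
      simp only [hg]
      rw [hchild_parent v c hc.1 hc.2]
    have hsumg : ∑ c ∈ rootedChildren G x v, g c = (lam * w v - w (pa v)) / w v := by
      rw [Finset.sum_congr rfl hgc, ← Finset.sum_div]
      congr 1
      linarith [hsum]
    have hdenom : lam - ∑ c ∈ rootedChildren G x v, g c = w (pa v) / w v := by
      rw [hsumg]
      field_simp [hw v]
      ring
    constructor
    · rw [hdenom]
      exact div_ne_zero (hw _) (hw v)
    · rw [hdenom]
      simp only [hg]
      rw [one_div_div]
  · have hpax : ∀ y ∈ G.neighborFinset x, g y = w y / w x := by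
      intro y hy
      rw [SimpleGraph.mem_neighborFinset] at hy
      have : G.dist x x < G.dist x y := by
        rw [SimpleGraph.dist_self]
        have : G.dist x y = 1 := SimpleGraph.dist_eq_one_iff_adj.mpr hy
        omega
      simp only [hg]
      rw [hchild_parent x y hy this]
    rw [Finset.sum_congr rfl hpax, ← Finset.sum_div, heq x,
      mul_div_assoc, div_self (hw x), mul_one]
end

section
/- Suppose real numbers λ, α, β, β⁽¹¹⁾, β⁽²⁾ satisfy λ² = α + λ⁻²β + λ⁻⁴(β⁽²⁾ + β⁽¹¹⁾) + E with |E| ≤ ε, together with the a priori bounds α ≤ λ² ≤ α + Cd, β ≤ 2dα, β⁽¹¹⁾ + β⁽²⁾ ≤ C'(d²+d)α, where 1 ≤ d ≤ α^{1/3} and α is sufficiently large. Then λ² = α + β/α + (β⁽¹¹⁾ + β⁽²⁾)/α² − β²/α³ + O(ε + (d²+d)²/α²). -/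
set_option maxHeartbeats 1600000 in
/-- Bootstrapping the eigenvalue equation: if
`λ² = α + λ⁻²β + λ⁻⁴(β⁽²⁾+β⁽¹¹⁾) + E` with `|E| ≤ ε`, together with the a priori bounds
`α ≤ λ² ≤ α + Cd`, `β ≤ 2dα`, `β⁽¹¹⁾+β⁽²⁾ ≤ C'(d²+d)α`, `1 ≤ d ≤ α^{1/3}`, and `α`
sufficiently large, then `λ² = α + β/α + (β⁽¹¹⁾+β⁽²⁾)/α² − β²/α³ + O(ε + (d²+d)²/α²)`. -/
theorem eigenvalue_bootstrap (C C' : ℝ) (hC : 0 < C) (hC' : 0 < C') :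
    ∃ C₀ A₀ : ℝ, 0 < C₀ ∧
      ∀ lam α β b11 b2 d ε : ℝ,
        A₀ ≤ α → 1 ≤ d → d ≤ α ^ ((1 : ℝ) / 3) →
        0 ≤ β → 0 ≤ b11 → 0 ≤ b2 → 0 ≤ ε →
        α ≤ lam ^ 2 → lam ^ 2 ≤ α + C * d →
        β ≤ 2 * d * α → b11 + b2 ≤ C' * (d ^ 2 + d) * α →
        |lam ^ 2 - (α + β / lam ^ 2 + (b2 + b11) / lam ^ 4)| ≤ ε →
        |lam ^ 2 - (α + β / α + (b11 + b2) / α ^ 2 - β ^ 2 / α ^ 3)| ≤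
          C₀ * (ε + (d ^ 2 + d) ^ 2 / α ^ 2) := by
  refine ⟨3 + 2*C' + 2*C*C' + 8*C, 1, by positivity, ?_⟩
  intro lam α β b11 b2 d ε hα hd hdα hβ hb11 hb2 hε hL1 hL2 hβα hBb hEq
  set L := lam ^ 2 with hLdef
  have hα0 : (0:ℝ) < α := by linarith
  have hL0 : (0:ℝ) < L := lt_of_lt_of_le hα0 hL1
  have hd0 : (0:ℝ) < d := by linarith
  -- d^3 ≤ α
  have hd3 : d ^ 3 ≤ α := by
    have h1 : d ^ 3 ≤ (α ^ ((1:ℝ)/3)) ^ 3 := pow_le_pow_left₀ hd0.le hdα 3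
    have h2 : (α ^ ((1:ℝ)/3)) ^ 3 = α := by
      rw [← Real.rpow_natCast (α ^ ((1:ℝ)/3)) 3, ← Real.rpow_mul hα0.le]
      norm_num
    linarith
  have hdle : d ≤ α := by nlinarith
  set B := b2 + b11 with hBdef
  have hB0 : (0:ℝ) ≤ B := by positivity
  have hB : B ≤ C' * (d ^ 2 + d) * α := by linarith
  set D := d ^ 2 + d with hDdef
  have hD0 : (0:ℝ) < D := by positivity
  have hdD : d ≤ D := by nlinarith
  set δ := L - α with hδdef
  have hδ0 : (0:ℝ) ≤ δ := by simp [hδdef]; linarith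
  have hδC : δ ≤ C * d := by simp [hδdef]; linarith
  set E' := L - (α + β / L + B / L ^ 2) with hE'def
  have hE' : |E'| ≤ ε := by
    have : L - (α + β / L + B / L ^ 2) = L - (α + β / L + (b2 + b11) / lam ^ 4) := by
      rw [hBdef, hLdef]; ring
    rw [hE'def, this]; exact hEq
  have hE'1 : -ε ≤ E' ∧ E' ≤ ε := abs_le.mp hE'
  -- q = β/(αL)
  set q := β / (α * L) with hqdef
  have hq0 : 0 ≤ q := by positivity
  have hq2 : q ≤ 2 := by
    rw [hqdef, div_le_iff₀ (by positivity)]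
    nlinarith
  have hEq2 : -(2*ε) ≤ E' * q ∧ E' * q ≤ 2*ε := by
    have h : |E' * q| ≤ ε * 2 := by
      rw [abs_mul, abs_of_nonneg hq0]
      exact mul_le_mul hE' hq2 hq0 hε
    have := abs_le.mp h
    constructor <;> linarith [this.1, this.2]
  -- t3
  set t3 := β * B / (α * L ^ 3) with ht3def
  have ht30 : 0 ≤ t3 := by positivity
  have ht3 : t3 ≤ 2 * C' * D ^ 2 / α ^ 2 := by
    rw [ht3def, div_le_div_iff₀ (by positivity) (by positivity)]
    calc β * B * α ^ 2 ≤ (2 * d * α) * (C' * D * α) * α ^ 2 := by gcongr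
      _ = 2 * C' * (d * α ^ 4) * D := by ring
      _ ≤ 2 * C' * (D * α ^ 4) * D := by gcongr
      _ = 2 * C' * D ^ 2 * (α * α ^ 3) := by ring
      _ ≤ 2 * C' * D ^ 2 * (α * L ^ 3) := by gcongr
  -- t4
  set t4 := B * δ * (L + α) / (α ^ 2 * L ^ 2) with ht4def
  have ht40 : 0 ≤ t4 := by positivity
  have ht4 : t4 ≤ 2 * C * C' * D ^ 2 / α ^ 2 := by
    rw [ht4def, div_le_div_iff₀ (by positivity) (by positivity)]
    have h2 : L + α ≤ 2 * L := by linarith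
    calc B * δ * (L + α) * α ^ 2
        ≤ (C' * D * α) * (C * d) * (2 * L) * α ^ 2 := by gcongr
      _ = 2 * C * C' * (D * (d * (α * α ^ 2 * L))) := by ring
      _ ≤ 2 * C * C' * (D * (D * (L * α ^ 2 * L))) := by gcongr
      _ = 2 * C * C' * D ^ 2 * (α ^ 2 * L ^ 2) := by ring
  -- t5
  set t5 := β ^ 2 * δ * (L + α) / (α ^ 3 * L ^ 2) with ht5def
  have ht50 : 0 ≤ t5 := by positivity
  have ht5 : t5 ≤ 8 * C * D ^ 2 / α ^ 2 := by
    rw [ht5def, div_le_div_iff₀ (by positivity) (by positivity)]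
    -- β² δ (L+α) α² ≤ 8 C D² α³ L²
    have h0 : β ^ 2 ≤ 4 * d ^ 2 * α ^ 2 := by
      calc β ^ 2 = β * β := sq β
        _ ≤ (2 * d * α) * (2 * d * α) := mul_le_mul hβα hβα hβ (by positivity)
        _ = 4 * d ^ 2 * α ^ 2 := by ring
    have h2 : L + α ≤ 2 * L := by linarith
    have h3 : d ^ 3 ≤ D ^ 2 := by nlinarith
    calc β ^ 2 * δ * (L + α) * α ^ 2
        ≤ (4 * d ^ 2 * α ^ 2) * (C * d) * (2 * L) * α ^ 2 := by gcongr
      _ = 8 * C * (d ^ 3 * (α * (α ^ 3 * L))) := by ring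
      _ ≤ 8 * C * (D ^ 2 * (L * (α ^ 3 * L))) := by gcongr
      _ = 8 * C * D ^ 2 * (α ^ 3 * L ^ 2) := by ring
  -- identity
  have hid : L - (α + β / α + (b11 + b2) / α ^ 2 - β ^ 2 / α ^ 3)
      = E' - E' * q - t3 - t4 + t5 := by
    rw [hE'def, hqdef, ht3def, ht4def, ht5def, hδdef, hBdef]
    field_simp
    ring
  rw [hid, abs_le]
  clear_value L B D δ E' q t3 t4 t5
  set P := D ^ 2 / α ^ 2 with hPdef
  have hP : (0:ℝ) ≤ P := by rw [hPdef]; positivity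
  have e3 : 2 * C' * D ^ 2 / α ^ 2 = 2 * C' * P := by rw [hPdef]; ring
  have e4 : 2 * C * C' * D ^ 2 / α ^ 2 = 2 * C * C' * P := by rw [hPdef]; ring
  have e5 : 8 * C * D ^ 2 / α ^ 2 = 8 * C * P := by rw [hPdef]; ring
  rw [e3] at ht3; rw [e4] at ht4; rw [e5] at ht5
  clear_value P
  have p1 : 0 ≤ C' * ε := mul_nonneg hC'.le hε
  have p2 : 0 ≤ C * C' * ε := mul_nonneg (mul_nonneg hC.le hC'.le) hε
  have p3 : 0 ≤ C * ε := mul_nonneg hC.le hε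
  have p4 : 0 ≤ C' * P := mul_nonneg hC'.le hP
  have p5 : 0 ≤ C * C' * P := mul_nonneg (mul_nonneg hC.le hC'.le) hP
  have p6 : 0 ≤ C * P := mul_nonneg hC.le hP
  constructor
  · linarith [hE'1.1, hE'1.2, hEq2.1, hEq2.2, ht30, ht3, ht40, ht4, ht50, ht5]
  · linarith [hE'1.1, hE'1.2, hEq2.1, hEq2.2, ht30, ht3, ht40, ht4, ht50, ht5]
end
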